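/- arXiv:quant-ph/0106084 — 7 statements merged into one kernel-verified Lean document; each statement's English description precedes it below -/
import Mathlib

section
/- If A is a bounded operator on a separable Hilbert space with orthonormal basis {|n⟩ : n ∈ ℕ} such that ⟨z|A|z⟩ = 0 for every coherent state |z⟩ = e^{-|z|²/2} ∑_n (zⁿ/√n!)|n⟩, z ∈ ℂ, then A = 0. -/
lemma aux_sqrt_fact (x : ℝ) (hx : 0 ≤ x) :
    Summable (fun n : ℕ => x ^ n / Real.sqrt (Nat.factorial n)) := by
  have hs : Summable (fun n : ℕ => ((2 * x ^ 2) ^ n / (Nat.factorial n : ℝ) + (1/2 : ℝ) ^ n) / 2) :=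
    ((Real.summable_pow_div_factorial _).add
      (summable_geometric_of_lt_one (by norm_num) (by norm_num))).div_const 2
  refine hs.of_nonneg_of_le (fun n => by positivity) (fun n => ?_)
  set a : ℝ := (2 * x ^ 2) ^ n / (Nat.factorial n : ℝ) with ha
  set b : ℝ := (1/2 : ℝ) ^ n with hb
  have hfac : (0:ℝ) < (Nat.factorial n : ℝ) := by positivity
  have hab : a * b = (x ^ 2) ^ n / (Nat.factorial n : ℝ) := by
    rw [ha, hb, div_mul_eq_mul_div, mul_pow]
    congr 2
    rw [mul_comm, ← mul_assoc, ← mul_pow]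
    norm_num
  have h1 : x ^ n / Real.sqrt (Nat.factorial n) = Real.sqrt (a * b) := by
    rw [hab, Real.sqrt_div' ((x^2)^n) hfac.le]
    congr 1
    rw [← pow_mul, mul_comm 2 n, pow_mul, Real.sqrt_sq (pow_nonneg hx n)]
  have ha0 : 0 ≤ a := by positivity
  have hb0 : 0 ≤ b := by positivity
  rw [h1]
  have : a * b ≤ ((a + b)/2)^2 := by nlinarith [sq_nonneg (a - b)]
  calc Real.sqrt (a * b) ≤ Real.sqrt (((a + b)/2)^2) := Real.sqrt_le_sqrt this
    _ = (a + b)/2 := Real.sqrt_sq (by positivity)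


lemma aux_ps_zero (c : ℕ → ℂ)
    (hsum : ∀ r : ℝ, 0 ≤ r → Summable (fun k => ‖c k‖ * r ^ k))
    (hzero : ∀ r : ℝ, ∑' k : ℕ, (r : ℝ) ^ k • c k = 0) : ∀ k, c k = 0 := by
  set p : FormalMultilinearSeries ℝ ℝ ℂ :=
    fun k => ContinuousMultilinearMap.mkPiRing ℝ (Fin k) (c k) with hp
  have hnorm : ∀ k, ‖p k‖ = ‖c k‖ := fun k => ContinuousMultilinearMap.norm_mkPiRing _
  have hrad : p.radius = ⊤ := by
    apply p.radius_eq_top_of_summable_norm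
    intro r
    simpa only [hnorm] using hsum r r.coe_nonneg
  have hball : HasFPowerSeriesOnBall p.sum p 0 ⊤ := by
    rw [← hrad]; exact p.hasFPowerSeriesOnBall (by rw [hrad]; exact ENNReal.zero_lt_top)
  have hsumeq : p.sum = 0 := by
    funext r
    have : p.sum r = ∑' k : ℕ, (r : ℝ) ^ k • c k := by
      unfold FormalMultilinearSeries.sum
      congr 1; funext k
      simp [hp, ContinuousMultilinearMap.mkPiRing_apply]
    rw [this, hzero r]; rfl
  have h0 : HasFPowerSeriesAt (0 : ℝ → ℂ) p 0 := by
    rw [← hsumeq]; exact hball.hasFPowerSeriesAt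
  have := h0.eq_zero
  intro k
  have hk : p k = 0 := by rw [this]; rfl
  have := congrArg (fun (m : ContinuousMultilinearMap ℝ (fun _ : Fin k => ℝ) ℂ) => m (fun _ => 1)) hk
  simpa [hp, ContinuousMultilinearMap.mkPiRing_apply] using this

open Finset Polynomial

lemma aux_poly (k : ℕ) (d : ℕ × ℕ → ℂ)
    (h : ∀ l : ℂ, ‖l‖ = 1 →
      ∑ p ∈ antidiagonal k, (starRingEnd ℂ) l ^ p.1 * l ^ p.2 * d p = 0) :
    ∀ p ∈ antidiagonal k, d p = 0 := by
  set P : ℂ[X] := ∑ p ∈ antidiagonal k, monomial (2 * p.2) (d p) with hP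
  have hroots : ∀ l : ℂ, ‖l‖ = 1 → P.eval l = 0 := by
    intro l hl
    have hconj : (starRingEnd ℂ) l * l = 1 := by
      rw [mul_comm, Complex.mul_conj]
      norm_cast
      rw [← Complex.sq_norm, hl]; norm_num
    have := h l hl
    have key : P.eval l = l ^ k * ∑ p ∈ antidiagonal k, (starRingEnd ℂ) l ^ p.1 * l ^ p.2 * d p := by
      rw [hP, eval_finset_sum, Finset.mul_sum]
      refine Finset.sum_congr rfl (fun p hp => ?_)
      rw [eval_monomial]
      rw [Finset.HasAntidiagonal.mem_antidiagonal] at hp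
      have : l ^ k = l ^ p.1 * l ^ p.2 := by rw [← pow_add, hp]
      rw [this]
      have : l ^ p.1 * ((starRingEnd ℂ) l) ^ p.1 = 1 := by
        rw [← mul_pow, mul_comm, hconj, one_pow]
      calc d p * l ^ (2 * p.2) = (l ^ p.1 * (starRingEnd ℂ) l ^ p.1) * (d p * l ^ (2 * p.2)) := by
            rw [this, one_mul]
        _ = l ^ p.1 * l ^ p.2 * ((starRingEnd ℂ) l ^ p.1 * l ^ p.2 * d p) := by
            rw [two_mul, pow_add]; ring
    rw [key, this, mul_zero]
  have hPzero : P = 0 := by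
    apply P.eq_zero_of_infinite_isRoot
    have hsub : (fun t : ℝ => Complex.exp (t * Complex.I)) '' Set.Ioo 0 1 ⊆
        {x | P.IsRoot x} := by
      rintro _ ⟨t, _, rfl⟩
      exact hroots _ (Complex.norm_exp_ofReal_mul_I t)
    refine Set.Infinite.mono hsub ?_
    apply Set.Infinite.image ?_ (Set.Ioo_infinite (by norm_num))
    intro a ha b hb hab
    have := Complex.exp_eq_exp_iff_exists_int.mp hab
    obtain ⟨n, hn⟩ := this
    have : (a : ℂ) = b + n * (2 * Real.pi) := by
      have : (a : ℂ) * Complex.I = ((b : ℂ) + n * (2 * Real.pi)) * Complex.I := by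
        rw [hn]; push_cast; ring
      exact mul_right_cancel₀ Complex.I_ne_zero this
    have hreal : a = b + n * (2 * Real.pi) := by exact_mod_cast this
    have hn0 : n = 0 := by
      rcases ha with ⟨ha0, ha1⟩
      rcases hb with ⟨hb0, hb1⟩
      have hpi := Real.pi_gt_three
      by_contra hne
      have hone : (1:ℝ) ≤ |(n:ℝ)| := by exact_mod_cast Int.one_le_abs (by exact_mod_cast hne)
      have hd : a - b = (n:ℝ) * (2 * Real.pi) := by linarith
      have h1 : |a - b| < 1 := abs_sub_lt_iff.mpr ⟨by linarith, by linarith⟩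
      rw [hd, abs_mul, abs_of_pos (by positivity : (0:ℝ) < 2 * Real.pi)] at h1
      nlinarith
    rw [hn0] at hreal; push_cast at hreal; linarith
  intro p hp
  have hco := congrArg (fun Q : ℂ[X] => Q.coeff (2 * p.2)) hPzero
  simp only [coeff_zero, hP, finset_sum_coeff, coeff_monomial] at hco
  rw [Finset.sum_eq_single p] at hco
  · simpa using hco
  · intro q hq hqp
    rw [if_neg]
    intro h2
    apply hqp
    have h2' : q.2 = p.2 := by omega
    rw [Finset.HasAntidiagonal.mem_antidiagonal] at hq hp
    have : q.1 = p.1 := by omega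
    exact Prod.ext this h2'
  · intro hnp; exact absurd hp hnp

open Finset

lemma aux_regroup {M : Type*} [AddCommGroup M] [UniformSpace M] [IsUniformAddGroup M]
    [CompleteSpace M] [T0Space M] (f : ℕ × ℕ → M) (hf : Summable f) :
    ∑' p : ℕ × ℕ, f p = ∑' k : ℕ, ∑ p ∈ antidiagonal k, f p := by
  rw [← Finset.HasAntidiagonal.sigmaAntidiagonalEquivProd.tsum_eq f]
  rw [show (fun c : (n : ℕ) × {x // x ∈ antidiagonal n} => f (Finset.HasAntidiagonal.sigmaAntidiagonalEquivProd c))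
    = f ∘ Finset.HasAntidiagonal.sigmaAntidiagonalEquivProd from rfl,
    Summable.tsum_sigma ((Finset.HasAntidiagonal.sigmaAntidiagonalEquivProd).summable_iff.mpr hf)]
  congr 1; funext k
  rw [← Finset.sum_finset_coe, ← tsum_fintype (L := .unconditional _)]
  rfl

lemma aux_regroup_summable {M : Type*} [AddCommGroup M] [UniformSpace M] [IsUniformAddGroup M]
    [CompleteSpace M] (f : ℕ × ℕ → M) (hf : Summable f) :
    Summable (fun k : ℕ => ∑ p ∈ antidiagonal k, f p) := by
  have h := ((Finset.HasAntidiagonal.sigmaAntidiagonalEquivProd).summable_iff.mpr hf).sigma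
    (γ := fun n => antidiagonal n)
  convert h using 2 with k
  rw [← Finset.sum_finset_coe, ← tsum_fintype (L := .unconditional _)]
  rfl

open scoped Real



open scoped Real

/-- The coherent state `|z⟩ = e^{-|z|²/2} ∑ₙ (zⁿ/√n!) |n⟩` with respect to the
orthonormal (number) basis `e`. -/
noncomputable def coherentState {H : Type*} [NormedAddCommGroup H] [InnerProductSpace ℂ H]
    [CompleteSpace H] (e : HilbertBasis ℕ ℂ H) (z : ℂ) : H :=
  (Real.exp (-(‖z‖) ^ 2 / 2) : ℂ) •
    ∑' n : ℕ, (z ^ n / (Real.sqrt (Nat.factorial n) : ℂ)) • e n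

/-- If a bounded operator `A` satisfies `⟨z|A|z⟩ = 0` for every coherent state `|z⟩`,
then `A = 0`. -/
theorem stmt0 {H : Type*} [NormedAddCommGroup H] [InnerProductSpace ℂ H] [CompleteSpace H]
    (e : HilbertBasis ℕ ℂ H) (A : H →L[ℂ] H)
    (h : ∀ z : ℂ, (inner ℂ (coherentState e z) (A (coherentState e z)) : ℂ) = 0) :
    A = 0 := by
  classical
  suffices hBzero : ∀ n m : ℕ, (inner ℂ (e n) (A (e m)) : ℂ) = 0 by
    have hAe : ∀ m, A (e m) = 0 := by
      intro m
      have h0 : e.repr (A (e m)) = 0 := by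
        ext n
        rw [e.repr_apply_apply, hBzero n m]
        simp
      have := congrArg e.repr.symm h0
      simpa using this
    have : Dense ((Submodule.span ℂ (Set.range e) : Submodule ℂ H) : Set H) :=
      Submodule.dense_iff_topologicalClosure_eq_top.mpr e.dense_span
    refine ContinuousLinearMap.ext_on this ?_
    rintro _ ⟨m, rfl⟩
    simp [hAe m]
  -- notation
  set B : ℕ → ℕ → ℂ := fun n m => (inner ℂ (e n) (A (e m)) : ℂ) with hB
  set d : ℕ × ℕ → ℂ := fun p => B p.1 p.2 /
    ((Real.sqrt (Nat.factorial p.1) : ℂ) * (Real.sqrt (Nat.factorial p.2) : ℂ)) with hd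
  set F : ℂ → ℕ × ℕ → ℂ := fun z p => (starRingEnd ℂ) z ^ p.1 * z ^ p.2 * d p with hF
  set coef : ℂ → ℕ → ℂ := fun z n => z ^ n / (Real.sqrt (Nat.factorial n) : ℂ) with hcoef
  have hsq : ∀ n : ℕ, (0:ℝ) < Real.sqrt (Nat.factorial n) :=
    fun n => Real.sqrt_pos.mpr (by positivity)
  have hBle : ∀ n m, ‖B n m‖ ≤ ‖A‖ := by
    intro n m
    calc ‖B n m‖ ≤ ‖e n‖ * ‖A (e m)‖ := norm_inner_le_norm _ _
      _ ≤ 1 * (‖A‖ * ‖e m‖) := by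
          rw [e.orthonormal.1 n]
          exact mul_le_mul_of_nonneg_left (A.le_opNorm _) zero_le_one
      _ = ‖A‖ := by rw [e.orthonormal.1 m]; ring
  have hcoefnorm : ∀ (z : ℂ) (n : ℕ),
      ‖coef z n‖ = ‖z‖ ^ n / Real.sqrt (Nat.factorial n) := by
    intro z n
    simp [hcoef, map_div₀, map_pow, Complex.norm_real,
      abs_of_pos (hsq n)]
  have hsum1 : ∀ z : ℂ, Summable (fun n : ℕ => ‖z‖ ^ n / Real.sqrt (Nat.factorial n)) :=
    fun z => aux_sqrt_fact _ (norm_nonneg z)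
  have hsumH : ∀ z : ℂ, Summable (fun n => coef z n • e n) := by
    intro z
    apply Summable.of_norm
    refine (hsum1 z).congr fun n => ?_
    rw [norm_smul, e.orthonormal.1 n, mul_one, hcoefnorm]
  set x : ℂ → H := fun z => ∑' n, coef z n • e n with hx
  have hxs : ∀ z, HasSum (fun n => coef z n • e n) (x z) := fun z => (hsumH z).hasSum
  have hFnorm : ∀ (z : ℂ) (p : ℕ × ℕ),
      ‖F z p‖ ≤ (‖z‖ ^ p.1 / Real.sqrt (Nat.factorial p.1)) *
        ((‖z‖ ^ p.2 / Real.sqrt (Nat.factorial p.2)) * ‖A‖) := by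
    intro z p
    have h1 : ‖F z p‖ = ‖z‖ ^ p.1 * ‖z‖ ^ p.2 *
        (‖B p.1 p.2‖ / (Real.sqrt (Nat.factorial p.1) * Real.sqrt (Nat.factorial p.2))) := by
      simp [hF, hd, map_mul, map_div₀, map_pow, Complex.norm_conj,
        Complex.norm_real, abs_of_pos (hsq _)]
    have h2 : (‖z‖ ^ p.1 / Real.sqrt (Nat.factorial p.1)) *
        ((‖z‖ ^ p.2 / Real.sqrt (Nat.factorial p.2)) * ‖A‖) =
        ‖z‖ ^ p.1 * ‖z‖ ^ p.2 *
        (‖A‖ / (Real.sqrt (Nat.factorial p.1) * Real.sqrt (Nat.factorial p.2))) := by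
      field_simp
    rw [h1, h2]
    gcongr
    exact hBle p.1 p.2
  have hsumFnorm : ∀ z : ℂ, Summable (fun p : ℕ × ℕ => ‖F z p‖) := by
    intro z
    have hb : Summable (fun p : ℕ × ℕ =>
        (‖z‖ ^ p.1 / Real.sqrt (Nat.factorial p.1)) *
        ((‖z‖ ^ p.2 / Real.sqrt (Nat.factorial p.2)) * ‖A‖)) := by
      exact summable_mul_of_summable_norm
        (f := fun n : ℕ => ‖z‖ ^ n / Real.sqrt (Nat.factorial n))
        (g := fun m : ℕ => (‖z‖ ^ m / Real.sqrt (Nat.factorial m)) * ‖A‖)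
        (summable_abs_iff.mpr (hsum1 z)) (summable_abs_iff.mpr ((hsum1 z).mul_right ‖A‖))
    exact hb.of_nonneg_of_le (fun p => norm_nonneg _) (hFnorm z)
  have hsumF : ∀ z : ℂ, Summable (F z) := fun z => (hsumFnorm z).of_norm
  -- HasSum chains
  have hAxs : ∀ z, HasSum (fun m => coef z m • A (e m)) (A (x z)) := by
    intro z
    have := (hxs z).mapL A
    simpa using this
  have hinner1 : ∀ (z : ℂ) (n : ℕ), HasSum (fun m => coef z m * B n m)
      ((inner ℂ (e n) (A (x z)) : ℂ)) := by
    intro z n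
    have := (hAxs z).mapL (innerSL ℂ (e n))
    simpa [inner_smul_right] using this
  have hinner2 : ∀ z : ℂ, HasSum
      (fun n => (starRingEnd ℂ) (coef z n) * (inner ℂ (e n) (A (x z)) : ℂ))
      ((inner ℂ (x z) (A (x z)) : ℂ)) := by
    intro z
    have h1 := ((hxs z).mapL (innerSL ℂ (A (x z)))).star
    have h2 : ∀ n : ℕ, star ((innerSL ℂ (A (x z))) (coef z n • e n)) =
        (starRingEnd ℂ) (coef z n) * (inner ℂ (e n) (A (x z)) : ℂ) := by
      intro n
      rw [innerSL_apply_apply, inner_smul_right]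
      rw [star_mul']
      congr 1
      exact inner_conj_symm _ _
    have h3 : star ((innerSL ℂ (A (x z))) (x z)) = (inner ℂ (x z) (A (x z)) : ℂ) := by
      rw [innerSL_apply_apply]
      exact inner_conj_symm _ _
    rw [← h3]
    exact h1.congr_fun (fun n => (h2 n).symm)
  -- key diagonal equation
  have hker : ∀ z : ℂ, ∑' n : ℕ, ∑' m : ℕ, F z (n, m) = 0 := by
    intro z
    have hcs : coherentState e z = ((Real.exp (-(‖z‖) ^ 2 / 2) : ℝ) : ℂ) • x z := rfl
    have hinner0 : (inner ℂ (x z) (A (x z)) : ℂ) = 0 := by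
      have hz := h z
      rw [hcs, map_smul, inner_smul_left, inner_smul_right] at hz
      have hre : ((Real.exp (-(‖z‖) ^ 2 / 2) : ℝ) : ℂ) ≠ 0 := by
        simpa using Real.exp_ne_zero _
      have hre' : (starRingEnd ℂ) ((Real.exp (-(‖z‖) ^ 2 / 2) : ℝ) : ℂ) ≠ 0 := by
        rw [Complex.conj_ofReal]; exact hre
      rcases mul_eq_zero.mp hz with h' | h'
      · exact absurd h' hre'
      rcases mul_eq_zero.mp h' with h'' | h''
      · exact absurd h'' hre
      exact h''
    have hFeq : ∀ n m : ℕ, F z (n, m) = (starRingEnd ℂ) (coef z n) * (coef z m * B n m) := by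
      intro n m
      have hs1 : ((Real.sqrt (Nat.factorial n) : ℝ) : ℂ) ≠ 0 := by
        exact_mod_cast (hsq n).ne'
      have hs2 : ((Real.sqrt (Nat.factorial m) : ℝ) : ℂ) ≠ 0 := by
        exact_mod_cast (hsq m).ne'
      simp only [hF, hd, hcoef, map_div₀, map_pow, Complex.conj_ofReal]
      field_simp
    calc ∑' n : ℕ, ∑' m : ℕ, F z (n, m)
        = ∑' n : ℕ, (starRingEnd ℂ) (coef z n) * (inner ℂ (e n) (A (x z)) : ℂ) := by
          congr 1; funext n
          simp only [hFeq]
          rw [tsum_mul_left, (hinner1 z n).tsum_eq]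
      _ = (inner ℂ (x z) (A (x z)) : ℂ) := (hinner2 z).tsum_eq
      _ = 0 := hinner0
  have hkey2 : ∀ z : ℂ, ∑' k : ℕ, ∑ p ∈ Finset.HasAntidiagonal.antidiagonal k, F z p = 0 := by
    intro z
    rw [← aux_regroup _ (hsumF z), Summable.tsum_prod (hsumF z)]
    exact hker z
  have hFscale : ∀ (l : ℂ) (r : ℝ) (p : ℕ × ℕ),
      F (l * (r : ℂ)) p = (r : ℂ) ^ (p.1 + p.2) * F l p := by
    intro l r p
    simp only [hF, map_mul, Complex.conj_ofReal, mul_pow, pow_add]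
    ring
  have hck : ∀ l : ℂ, ‖l‖ = 1 →
      ∀ k, ∑ p ∈ Finset.HasAntidiagonal.antidiagonal k, F l p = 0 := by
    intro l hl
    apply aux_ps_zero (fun k => ∑ p ∈ Finset.HasAntidiagonal.antidiagonal k, F l p)
    · intro r hr
      have hN : Summable (fun k => ∑ p ∈ Finset.HasAntidiagonal.antidiagonal k, ‖F (l * (r : ℂ)) p‖) :=
        aux_regroup_summable _ (hsumFnorm (l * (r : ℂ)))
      refine hN.of_nonneg_of_le (fun k => by positivity) (fun k => ?_)
      calc ‖∑ p ∈ Finset.HasAntidiagonal.antidiagonal k, F l p‖ * r ^ k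
          ≤ (∑ p ∈ Finset.HasAntidiagonal.antidiagonal k, ‖F l p‖) * r ^ k := by
            gcongr
            exact norm_sum_le _ _
        _ = ∑ p ∈ Finset.HasAntidiagonal.antidiagonal k, ‖F l p‖ * r ^ k := Finset.sum_mul _ _ _
        _ = ∑ p ∈ Finset.HasAntidiagonal.antidiagonal k, ‖F (l * (r : ℂ)) p‖ := by
            refine Finset.sum_congr rfl fun p hp => ?_
            rw [Finset.HasAntidiagonal.mem_antidiagonal] at hp
            have h5 : ‖F (l * (r : ℂ)) p‖ = r ^ k * ‖F l p‖ := by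
              rw [hFscale l r p, hp, norm_mul, norm_pow, Complex.norm_real,
                Real.norm_of_nonneg hr]
            rw [h5]
            ring
    · intro r
      rw [← hkey2 (l * (r : ℂ))]
      congr 1; funext k
      rw [Finset.smul_sum]
      refine (Finset.sum_congr rfl fun p hp => ?_).symm
      rw [Finset.HasAntidiagonal.mem_antidiagonal] at hp
      rw [hFscale, ← hp]
      rw [Complex.real_smul, Complex.ofReal_pow]
  intro n m
  have hd0 : d (n, m) = 0 := by
    refine aux_poly (n + m) d (fun l hl => ?_) (n, m) (Finset.HasAntidiagonal.mem_antidiagonal.mpr rfl)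
    exact hck l hl (n + m)
  have hs1 : ((Real.sqrt (Nat.factorial n) : ℝ) : ℂ) ≠ 0 := by exact_mod_cast (hsq n).ne'
  have hs2 : ((Real.sqrt (Nat.factorial m) : ℝ) : ℂ) ≠ 0 := by exact_mod_cast (hsq m).ne'
  have : B n m = 0 := by
    have := hd0
    rw [hd] at this
    simpa [_root_.div_eq_zero_iff, mul_eq_zero, hs1, hs2] using this
  exact this
end

section
/- Let f(z) = ∑_{n,m=0}^∞ A_{n,m} z̄ⁿ zᵐ / √(n! m!) where (A_{n,m}) is a bounded complex matrix (|A_{n,m}| ≤ C for all n,m). If f(z) = 0 for all z ∈ ℂ, then A_{n,m} = 0 for all n, m. -/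
set_option maxHeartbeats 1000000

open scoped Real

private lemma aux_summable {r : ℝ} (hr : 0 ≤ r) :
    Summable (fun n : ℕ => r ^ n / Real.sqrt (Nat.factorial n)) := by
  apply summable_of_ratio_norm_eventually_le (r := 1/2) (by norm_num)
  filter_upwards [Filter.eventually_ge_atTop ⌈(2*r)^2⌉₊] with n hn
  have hb : 0 < Real.sqrt (Nat.factorial n) :=
    Real.sqrt_pos.mpr (by exact_mod_cast Nat.factorial_pos n)
  have hs : 0 < Real.sqrt ((n : ℝ) + 1) := Real.sqrt_pos.mpr (by positivity)
  have h1 : ((2*r)^2 : ℝ) ≤ (n : ℝ) + 1 := by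
    calc ((2*r)^2 : ℝ) ≤ (⌈(2*r)^2⌉₊ : ℝ) := Nat.le_ceil _
      _ ≤ (n : ℝ) := by exact_mod_cast hn
      _ ≤ (n : ℝ) + 1 := by linarith
  have ha : 2*r ≤ Real.sqrt ((n : ℝ) + 1) := by
    calc 2*r = Real.sqrt ((2*r)^2) := (Real.sqrt_sq (by positivity)).symm
      _ ≤ _ := Real.sqrt_le_sqrt h1
  have hfact : Real.sqrt (Nat.factorial (n+1)) =
      Real.sqrt ((n : ℝ) + 1) * Real.sqrt (Nat.factorial n) := by
    rw [← Real.sqrt_mul (by positivity), Nat.factorial_succ]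
    push_cast
    ring_nf
  have h2 : r / Real.sqrt ((n : ℝ) + 1) ≤ 1/2 := by
    rw [div_le_iff₀ hs]; linarith
  rw [Real.norm_eq_abs, Real.norm_eq_abs, abs_of_nonneg (by positivity),
    abs_of_nonneg (by positivity), hfact]
  calc r ^ (n+1) / (Real.sqrt ((n : ℝ) + 1) * Real.sqrt (Nat.factorial n))
      = (r / Real.sqrt ((n : ℝ) + 1)) * (r ^ n / Real.sqrt (Nat.factorial n)) := by
        rw [pow_succ]; ring
    _ ≤ 1/2 * (r ^ n / Real.sqrt (Nat.factorial n)) :=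
        mul_le_mul_of_nonneg_right h2 (by positivity)

/-- If `f(z) = ∑_{n,m} A_{n,m} z̄ⁿ zᵐ / √(n! m!)` vanishes for all `z ∈ ℂ`, where the
matrix `(A_{n,m})` is bounded (`‖A n m‖ ≤ C`), then every `A_{n,m}` is zero. -/
theorem stmt1 (A : ℕ → ℕ → ℂ) (C : ℝ) (hC : ∀ n m, ‖A n m‖ ≤ C)
    (h : ∀ z : ℂ,
      (∑' p : ℕ × ℕ,
        A p.1 p.2 * (starRingEnd ℂ z) ^ p.1 * z ^ p.2 /
          ((Real.sqrt (Nat.factorial p.1 * Nat.factorial p.2) : ℝ) : ℂ)) = 0) :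
    ∀ n m, A n m = 0 := by
  have hd : ∀ p : ℕ × ℕ, Real.sqrt ((Nat.factorial p.1 * Nat.factorial p.2 : ℕ) : ℝ) =
      Real.sqrt (Nat.factorial p.1) * Real.sqrt (Nat.factorial p.2) := by
    intro p
    rw [show ((Nat.factorial p.1 * Nat.factorial p.2 : ℕ) : ℝ) =
      ((Nat.factorial p.1 : ℝ)) * ((Nat.factorial p.2 : ℝ)) by push_cast; ring]
    exact Real.sqrt_mul (by positivity) _
  have hdpos : ∀ p : ℕ × ℕ, (0:ℝ) < Real.sqrt ((Nat.factorial p.1 * Nat.factorial p.2 : ℕ) : ℝ) := by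
    intro p
    exact Real.sqrt_pos.mpr (by exact_mod_cast Nat.mul_pos (Nat.factorial_pos _) (Nat.factorial_pos _))
  -- Step 1: for every unit u and every k, the antidiagonal sums vanish.
  have key : ∀ u : ℂ, ‖u‖ = 1 → ∀ k : ℕ,
      (∑ p ∈ Finset.HasAntidiagonal.antidiagonal k, A p.1 p.2 * (starRingEnd ℂ u) ^ p.1 * u ^ p.2 /
        ((Real.sqrt (Nat.factorial p.1 * Nat.factorial p.2) : ℝ) : ℂ)) = 0 := by
    intro u hu
    set B : ℕ × ℕ → ℂ := fun p => A p.1 p.2 * (starRingEnd ℂ u) ^ p.1 * u ^ p.2 /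
      ((Real.sqrt (Nat.factorial p.1 * Nat.factorial p.2) : ℝ) : ℂ) with hB
    have hnormB : ∀ (t : ℝ) (p : ℕ × ℕ), ‖B p * (t:ℂ) ^ (p.1 + p.2)‖ =
        ‖A p.1 p.2‖ * |t| ^ p.1 * |t| ^ p.2 /
          (Real.sqrt (Nat.factorial p.1) * Real.sqrt (Nat.factorial p.2)) := by
      intro t p
      rw [hB]
      simp only [norm_mul, norm_div, norm_pow, Complex.norm_real, Real.norm_eq_abs,
        RCLike.norm_conj, hu, one_pow, mul_one, abs_of_nonneg (Real.sqrt_nonneg _),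
        Complex.norm_real, pow_add]
      rw [Real.sqrt_mul (by positivity : (0:ℝ) ≤ (Nat.factorial p.1 : ℝ))]
      ring
    have hsum : ∀ t : ℝ, Summable (fun p : ℕ × ℕ => B p * (t:ℂ) ^ (p.1 + p.2)) := by
      intro t
      apply Summable.of_norm_bounded
        (g := fun p : ℕ × ℕ => (C * (|t| ^ p.1 / Real.sqrt (Nat.factorial p.1))) *
          (|t| ^ p.2 / Real.sqrt (Nat.factorial p.2)))
      · have hC0 : (0:ℝ) ≤ C := (norm_nonneg _).trans (hC 0 0)
        exact Summable.mul_of_nonneg ((aux_summable (abs_nonneg t)).mul_left C)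
          (aux_summable (abs_nonneg t))
          (fun n => mul_nonneg hC0 (div_nonneg (pow_nonneg (abs_nonneg t) _) (Real.sqrt_nonneg _)))
          (fun n => div_nonneg (pow_nonneg (abs_nonneg t) _) (Real.sqrt_nonneg _))
      · intro p
        rw [hnormB t p]
        have h1 : 0 < Real.sqrt (Nat.factorial p.1) :=
          Real.sqrt_pos.mpr (by exact_mod_cast Nat.factorial_pos _)
        have h2 : 0 < Real.sqrt (Nat.factorial p.2) :=
          Real.sqrt_pos.mpr (by exact_mod_cast Nat.factorial_pos _)
        have h3 := hC p.1 p.2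
        calc ‖A p.1 p.2‖ * |t| ^ p.1 * |t| ^ p.2 /
              (Real.sqrt (Nat.factorial p.1) * Real.sqrt (Nat.factorial p.2))
            ≤ C * |t| ^ p.1 * |t| ^ p.2 /
              (Real.sqrt (Nat.factorial p.1) * Real.sqrt (Nat.factorial p.2)) := by gcongr
          _ = (C * (|t| ^ p.1 / Real.sqrt (Nat.factorial p.1))) *
              (|t| ^ p.2 / Real.sqrt (Nat.factorial p.2)) := by ring
    have hzero : ∀ t : ℝ, HasSum (fun p : ℕ × ℕ => B p * (t:ℂ) ^ (p.1 + p.2)) 0 := by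
      intro t
      have h0 := h ((t:ℂ) * u)
      have h0' : (∑' p : ℕ × ℕ, B p * (t:ℂ) ^ (p.1 + p.2)) = 0 := by
        rw [← h0]
        refine tsum_congr fun p => ?_
        rw [hB]
        simp only [map_mul, Complex.conj_ofReal, mul_pow, pow_add]
        ring
      exact (hsum t).hasSum_iff.mpr h0'
    set c : ℕ → ℂ := fun k => ∑ p ∈ Finset.HasAntidiagonal.antidiagonal k, B p with hc
    have hsetfib : ∀ k : ℕ, ((fun p : ℕ × ℕ => p.1 + p.2) ⁻¹' {k} : Set (ℕ × ℕ)) =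
        ↑(Finset.HasAntidiagonal.antidiagonal k) := by
      intro k
      ext p
      simp [Finset.HasAntidiagonal.mem_antidiagonal]
    have hfiber : ∀ t : ℝ, HasSum (fun k : ℕ => c k * (t:ℂ) ^ k) 0 := by
      intro t
      have H := (hzero t).tsum_fiberwise (fun p => p.1 + p.2)
      have heq : (fun k : ℕ => ∑' (b : (fun p : ℕ × ℕ => p.1 + p.2) ⁻¹' {k}),
          B b.val * (t:ℂ) ^ (b.val.1 + b.val.2)) = fun k : ℕ => c k * (t:ℂ) ^ k := by
        funext k
        rw [show ((fun p : ℕ × ℕ => p.1 + p.2) ⁻¹' {k}) = ↑(Finset.HasAntidiagonal.antidiagonal k) from hsetfib k,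
          Finset.tsum_subtype' (Finset.HasAntidiagonal.antidiagonal k)
            (fun p => B p * (t:ℂ) ^ (p.1 + p.2)), hc, Finset.sum_mul]
        refine Finset.sum_congr rfl fun p hp => ?_
        rw [Finset.HasAntidiagonal.mem_antidiagonal.mp hp]
      rwa [heq] at H
    -- c is norm-summable
    have hcs : Summable (fun k : ℕ => ‖c k‖) := by
      have hBsum : Summable B := by simpa using hsum 1
      have hBnorm : Summable (fun p : ℕ × ℕ => ‖B p‖) := summable_norm_iff.mpr hBsum
      have H := hBnorm.hasSum.tsum_fiberwise (fun p => p.1 + p.2)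
      have heq : (fun k : ℕ => ∑' (b : (fun p : ℕ × ℕ => p.1 + p.2) ⁻¹' {k}), ‖B b.val‖) =
          fun k : ℕ => ∑ p ∈ Finset.HasAntidiagonal.antidiagonal k, ‖B p‖ := by
        funext k
        rw [show ((fun p : ℕ × ℕ => p.1 + p.2) ⁻¹' {k}) = ↑(Finset.HasAntidiagonal.antidiagonal k) from hsetfib k,
          Finset.tsum_subtype' (Finset.HasAntidiagonal.antidiagonal k) (fun p => ‖B p‖)]
      rw [heq] at H
      exact H.summable.of_nonneg_of_le (fun k => norm_nonneg _)
        (fun k => norm_sum_le _ _)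
    -- power series
    set ps : FormalMultilinearSeries ℝ ℝ ℂ :=
      fun k => ContinuousMultilinearMap.mkPiRing ℝ (Fin k) (c k) with hpsdef
    have hps : HasFPowerSeriesOnBall (0 : ℝ → ℂ) ps 0 1 := by
      refine ⟨?_, one_pos, ?_⟩
      · have : Summable fun n : ℕ => ‖ps n‖ * (1:ℝ) ^ n := by
          simpa [hpsdef, ContinuousMultilinearMap.norm_mkPiRing] using hcs
        simpa using ps.le_radius_of_summable_norm (r := 1) (by simpa using this)
      · intro y _
        have H := hfiber y
        have heq : (fun n : ℕ => ps n fun _ => y) = fun n : ℕ => c n * (y:ℂ) ^ n := by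
          funext n
          simp only [hpsdef, ContinuousMultilinearMap.mkPiRing_apply, Finset.prod_const,
            Finset.card_univ, Fintype.card_fin, Complex.real_smul]
          push_cast
          ring
        rw [heq]
        simpa using H
    have hps0 : ps = 0 := hps.hasFPowerSeriesAt.eq_zero
    intro k
    have hck : c k = 0 := by
      have h1 : ps k = 0 := by rw [hps0]; rfl
      calc c k = ps k (fun _ => 1) := by
            simp [hpsdef, ContinuousMultilinearMap.mkPiRing_apply]
        _ = 0 := by rw [h1]; simp
    simpa [hc, hB] using hck
  -- Step 2: polynomial argument on the unit circle.
  have hsphere : Set.Infinite {u : ℂ | ‖u‖ = 1} := by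
    apply Set.infinite_of_injective_forall_mem
      (f := fun n : ℕ => Complex.exp ((1/((n:ℝ)+1) : ℝ) * Complex.I))
    · intro a b hab
      simp only [Complex.exp_eq_exp_iff_exists_int] at hab
      obtain ⟨q, hq⟩ := hab
      have hxy : ((1/((a:ℝ)+1) : ℝ) : ℂ) = ((1/((b:ℝ)+1) : ℝ) : ℂ) + (q:ℂ) * (2*(π:ℝ)) := by
        have h2 : ((1/((b:ℝ)+1) : ℝ) : ℂ) * Complex.I + (q:ℂ) * (2 * (π:ℂ) * Complex.I) =
            (((1/((b:ℝ)+1) : ℝ) : ℂ) + (q:ℂ) * (2*(π:ℝ))) * Complex.I := by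
          push_cast
          ring
        rw [h2] at hq
        exact mul_right_cancel₀ Complex.I_ne_zero hq
      have hr : (1/((a:ℝ)+1) : ℝ) = 1/((b:ℝ)+1) + (q:ℝ) * (2*π) := by
        exact_mod_cast hxy
      have ha1 : (0:ℝ) < 1/((a:ℝ)+1) := by positivity
      have ha2 : (1:ℝ)/((a:ℝ)+1) ≤ 1 := by
        rw [div_le_one (by positivity)]
        have : (0:ℝ) ≤ (a:ℝ) := Nat.cast_nonneg a
        linarith
      have hb1 : (0:ℝ) < 1/((b:ℝ)+1) := by positivity
      have hb2 : (1:ℝ)/((b:ℝ)+1) ≤ 1 := by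
        rw [div_le_one (by positivity)]
        have : (0:ℝ) ≤ (b:ℝ) := Nat.cast_nonneg b
        linarith
      have hπ := Real.pi_gt_three
      have hq0 : q = 0 := by
        by_contra hq0
        have h1 : (1:ℝ) ≤ |(q:ℝ)| := by exact_mod_cast Int.one_le_abs hq0
        rcases abs_cases (q:ℝ) with ⟨he, _⟩ | ⟨he, _⟩ <;> nlinarith
      rw [hq0] at hr
      simp only [Int.cast_zero, zero_mul, add_zero] at hr
      field_simp at hr
      exact_mod_cast (by linarith : (a:ℝ) = b)
    · intro n
      simp only [Set.mem_setOf_eq, Complex.norm_exp_ofReal_mul_I]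
  intro n m
  set k := n + m with hk
  set Q : Polynomial ℂ := ∑ j ∈ Finset.range (k+1),
    Polynomial.C (A j (k-j) /
      ((Real.sqrt (Nat.factorial j * Nat.factorial (k-j)) : ℝ) : ℂ)) * Polynomial.X ^ (2*(k-j))
    with hQdef
  have hroot : ∀ u ∈ {u : ℂ | ‖u‖ = 1}, Q.IsRoot u := by
    intro u hu
    have hu' : ‖u‖ = 1 := hu
    have hu0 : u ≠ 0 := by
      intro h0
      rw [h0] at hu'
      simp at hu'
    have hconj : (starRingEnd ℂ) u = u⁻¹ := (RCLike.inv_eq_conj hu').symm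
    have hkey := key u hu' k
    rw [Finset.Nat.sum_antidiagonal_eq_sum_range_succ_mk] at hkey
    rw [Polynomial.IsRoot, hQdef, Polynomial.eval_finset_sum]
    have hterm : ∀ j ∈ Finset.range (k+1),
        Polynomial.eval u (Polynomial.C (A j (k-j) /
          ((Real.sqrt (Nat.factorial j * Nat.factorial (k-j)) : ℝ) : ℂ)) *
            Polynomial.X ^ (2*(k-j)))
        = u ^ k * (A j (k-j) * (starRingEnd ℂ u) ^ j * u ^ (k-j) /
          ((Real.sqrt (Nat.factorial j * Nat.factorial (k-j)) : ℝ) : ℂ)) := by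
      intro j hj
      have hj' : j ≤ k := Nat.lt_succ_iff.mp (Finset.mem_range.mp hj)
      rw [Polynomial.eval_mul, Polynomial.eval_C, Polynomial.eval_pow, Polynomial.eval_X, hconj]
      have hpow : u ^ k * (u⁻¹) ^ j * u ^ (k-j) = u ^ (2*(k-j)) := by
        rw [inv_pow, show u ^ k = u ^ j * u ^ (k-j) by rw [← pow_add, Nat.add_sub_cancel' hj']]
        field_simp
        ring
      rw [← hpow]
      ring
    rw [Finset.sum_congr rfl hterm, ← Finset.mul_sum, hkey, mul_zero]
  have hQ0 : Q = 0 :=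
    Q.eq_zero_of_infinite_isRoot (hsphere.mono (fun u hu => hroot u hu))
  have hcoeff := congrArg (fun q : Polynomial ℂ => q.coeff (2*m)) hQ0
  simp only [hQdef, Polynomial.finset_sum_coeff, Polynomial.coeff_C_mul_X_pow,
    Polynomial.coeff_zero] at hcoeff
  rw [Finset.sum_eq_single n] at hcoeff
  · have hkn : k - n = m := by omega
    rw [hkn, if_pos rfl] at hcoeff
    have hdne : ((Real.sqrt (Nat.factorial n * Nat.factorial m) : ℝ) : ℂ) ≠ 0 := by
      exact_mod_cast (hdpos (n, m)).ne'
    exact (div_eq_zero_iff.mp hcoeff).resolve_right hdne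
  · intro j hjmem hj
    have : j ≤ k := Nat.lt_succ_iff.mp (Finset.mem_range.mp hjmem)
    rw [if_neg (by omega)]
  · intro hm
    exact absurd (Finset.mem_range.mpr (by omega)) hm
end

section
/- A POM E on the Borel sets of [0,2π) is phase shift covariant (R(θ)E(X)R(θ)* = E(X⊕θ) for all Borel X and θ ∈ ℝ) if and only if all coherent state probability measures satisfy the covariance condition p_{|z e^{-iθ}⟩}(X) = p_{|z⟩}(X⊕θ) for all z ∈ ℂ, θ ∈ [0,2π), X Borel. -/
open scoped Real
open MeasureTheory ContinuousLinearMap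

/-- The cyclically shifted set `X ⊕ θ = {x ∈ [0,2π) | (x − θ) mod 2π ∈ X}`. -/
def shiftSet (X : Set ℝ) (θ : ℝ) : Set ℝ :=
  {x | x ∈ Set.Ico 0 (2 * π) ∧ 2 * π * Int.fract ((x - θ) / (2 * π)) ∈ X}

set_option maxHeartbeats 1600000
set_option linter.unusedSectionVars false

namespace StmtAux

noncomputable def coeff (z : ℂ) (n : ℕ) : ℂ := z ^ n / (Real.sqrt (Nat.factorial n) : ℂ)

lemma sqrt_fact_pos (n : ℕ) : (0:ℝ) < Real.sqrt (Nat.factorial n) :=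
  Real.sqrt_pos.mpr (by exact_mod_cast Nat.factorial_pos n)

lemma norm_coeff (z : ℂ) (n : ℕ) :
    ‖coeff z n‖ = ‖z‖ ^ n / Real.sqrt (Nat.factorial n) := by
  rw [coeff, norm_div, norm_pow, Complex.norm_real, Real.norm_eq_abs,
    abs_of_nonneg (Real.sqrt_nonneg _)]

lemma summable_norm_coeff (z : ℂ) : Summable (fun n => ‖coeff z n‖) := by
  apply summable_of_ratio_norm_eventually_le (r := 1/2) (by norm_num)
  filter_upwards [Filter.eventually_ge_atTop (⌈(2 * ‖z‖)^2⌉₊)] with n hn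
  rw [norm_norm, norm_norm, norm_coeff, norm_coeff]
  have hA : (0:ℝ) ≤ ‖z‖ := norm_nonneg z
  have h1 : Real.sqrt ((Nat.factorial (n+1) : ℕ)) =
      Real.sqrt (n+1) * Real.sqrt (Nat.factorial n) := by
    rw [Nat.factorial_succ, Nat.cast_mul, Real.sqrt_mul (by positivity)]
    norm_num
  have h2 : 2 * ‖z‖ ≤ Real.sqrt (n+1) := by
    have : ((2 * ‖z‖)^2 : ℝ) ≤ (n+1 : ℝ) := by
      calc ((2 * ‖z‖)^2 : ℝ) ≤ (⌈(2 * ‖z‖)^2⌉₊ : ℝ) := Nat.le_ceil _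
      _ ≤ (n : ℝ) := by exact_mod_cast hn
      _ ≤ (n+1 : ℝ) := by linarith
    calc 2 * ‖z‖ = Real.sqrt ((2 * ‖z‖)^2) :=
          (Real.sqrt_sq (by positivity)).symm
      _ ≤ Real.sqrt (n+1) := Real.sqrt_le_sqrt this
  have h3 : (0:ℝ) < Real.sqrt (n+1) := by positivity
  have h4 := sqrt_fact_pos n
  rw [h1, pow_succ]
  rw [div_le_iff₀ (by positivity)]
  have : ‖z‖ ^ n / Real.sqrt (Nat.factorial n) * ‖z‖ * 2
      ≤ ‖z‖ ^ n / Real.sqrt (Nat.factorial n) * Real.sqrt (n+1) := by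
    have hterm : (0:ℝ) ≤ ‖z‖ ^ n / Real.sqrt (Nat.factorial n) := by positivity
    nlinarith [mul_le_mul_of_nonneg_left h2 hterm]
  calc ‖z‖ ^ n * ‖z‖
      = (‖z‖ ^ n / Real.sqrt (Nat.factorial n) * ‖z‖)
        * Real.sqrt (Nat.factorial n) := by field_simp
    _ ≤ 1/2 * (‖z‖ ^ n / Real.sqrt (Nat.factorial n))
        * (Real.sqrt (n+1) * Real.sqrt (Nat.factorial n)) := by
      rw [mul_comm (1/2 : ℝ)]
      nlinarith [mul_le_mul_of_nonneg_right this (le_of_lt h4)]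


lemma ps_base (b : ℕ → ℂ) (hb : Summable fun q => ‖b q‖)
    (h : ∀ s : ℝ, s ∈ Set.Ioc (0:ℝ) 1 → ∑' q, b q * (s:ℂ)^q = 0) : b 0 = 0 := by
  set C : ℝ := ∑' q, ‖b (q+1)‖ with hC
  have hb1 : Summable fun q => ‖b (q+1)‖ := (summable_nat_add_iff 1).mpr hb
  have hC0 : 0 ≤ C := tsum_nonneg (fun q => norm_nonneg _)
  have key : ∀ s : ℝ, s ∈ Set.Ioc (0:ℝ) 1 → ‖b 0‖ ≤ C * s := by
    intro s hs
    obtain ⟨hs0, hs1⟩ := hs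
    have hsum : Summable fun q => b q * (s:ℂ)^q := by
      apply Summable.of_norm
      refine hb.of_nonneg_of_le (fun q => norm_nonneg _) (fun q => ?_)
      rw [norm_mul, norm_pow]
      calc ‖b q‖ * ‖(s:ℂ)‖^q ≤ ‖b q‖ * 1 := by
            apply mul_le_mul_of_nonneg_left _ (norm_nonneg _)
            apply pow_le_one₀ (norm_nonneg _)
            rw [Complex.norm_real, Real.norm_eq_abs, abs_of_nonneg hs0.le]
            exact hs1
        _ = ‖b q‖ := mul_one _
    have h0 := h s ⟨hs0, hs1⟩
    rw [hsum.tsum_eq_zero_add] at h0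
    simp only [pow_zero, mul_one] at h0
    have hb0 : b 0 = -∑' q, b (q+1) * (s:ℂ)^(q+1) := by linear_combination h0
    rw [hb0, norm_neg]
    have hsum1 : Summable fun q => ‖b (q+1) * (s:ℂ)^(q+1)‖ := by
      refine hb1.of_nonneg_of_le (fun q => norm_nonneg _) (fun q => ?_)
      rw [norm_mul, norm_pow]
      calc ‖b (q+1)‖ * ‖(s:ℂ)‖^(q+1) ≤ ‖b (q+1)‖ * 1 := by
            apply mul_le_mul_of_nonneg_left _ (norm_nonneg _)
            apply pow_le_one₀ (norm_nonneg _)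
            rw [Complex.norm_real, Real.norm_eq_abs, abs_of_nonneg hs0.le]
            exact hs1
        _ = _ := mul_one _
    calc ‖∑' q, b (q+1) * (s:ℂ)^(q+1)‖ ≤ ∑' q, ‖b (q+1) * (s:ℂ)^(q+1)‖ :=
          norm_tsum_le_tsum_norm hsum1
      _ ≤ ∑' q, ‖b (q+1)‖ * s := by
          refine Summable.tsum_le_tsum (fun q => ?_) hsum1 (hb1.mul_right s)
          rw [norm_mul, norm_pow, Complex.norm_real, Real.norm_eq_abs, abs_of_nonneg hs0.le]
          apply mul_le_mul_of_nonneg_left _ (norm_nonneg _)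
          calc s^(q+1) ≤ s^1 := pow_le_pow_of_le_one hs0.le hs1 (by omega)
            _ = s := pow_one s
      _ = C * s := by rw [tsum_mul_right]
  by_contra hne
  have hpos : 0 < ‖b 0‖ := norm_pos_iff.mpr hne
  have hsmem : min 1 (‖b 0‖ / (2*(C+1))) ∈ Set.Ioc (0:ℝ) 1 :=
    ⟨lt_min one_pos (by positivity), min_le_left _ _⟩
  have := key _ hsmem
  have hle : C * min 1 (‖b 0‖ / (2*(C+1))) ≤ C * (‖b 0‖ / (2*(C+1))) :=
    mul_le_mul_of_nonneg_left (min_le_right _ _) hC0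
  have hlt : C * (‖b 0‖ / (2*(C+1))) < ‖b 0‖ := by
    rw [mul_div_assoc']
    rw [div_lt_iff₀ (by positivity)]
    nlinarith
  linarith

lemma ps_all (q : ℕ) : ∀ (b : ℕ → ℂ), (Summable fun n => ‖b n‖) →
    (∀ s : ℝ, s ∈ Set.Ioc (0:ℝ) 1 → ∑' n, b n * (s:ℂ)^n = 0) → b q = 0 := by
  induction q with
  | zero => exact fun b hb h => ps_base b hb h
  | succ q IH =>
    intro b hb h
    have hb0 : b 0 = 0 := ps_base b hb h
    have hb1 : Summable fun n => ‖b (n+1)‖ := (summable_nat_add_iff 1).mpr hb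
    refine IH (fun n => b (n+1)) hb1 (fun s hs => ?_)
    obtain ⟨hs0, hs1⟩ := hs
    have hsum : Summable fun n => b n * (s:ℂ)^n := by
      apply Summable.of_norm
      refine hb.of_nonneg_of_le (fun n => norm_nonneg _) (fun n => ?_)
      rw [norm_mul, norm_pow]
      calc ‖b n‖ * ‖(s:ℂ)‖^n ≤ ‖b n‖ * 1 := by
            apply mul_le_mul_of_nonneg_left _ (norm_nonneg _)
            apply pow_le_one₀ (norm_nonneg _)
            rw [Complex.norm_real, Real.norm_eq_abs, abs_of_nonneg hs0.le]
            exact hs1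
        _ = _ := mul_one _
    have h0 := h s ⟨hs0, hs1⟩
    rw [hsum.tsum_eq_zero_add, hb0] at h0
    simp only [zero_mul, zero_add] at h0
    have hfac : ∀ n : ℕ, b (n+1) * (s:ℂ)^(n+1) = (s:ℂ) * (b (n+1) * (s:ℂ)^n) := by
      intro n; ring
    simp only [hfac, tsum_mul_left] at h0
    rcases mul_eq_zero.mp h0 with h' | h'
    · exact absurd h' (by exact_mod_cast hs0.ne')
    · simpa using h'


lemma integral_exp_I (L : ℤ) :
    (∫ φ in (0:ℝ)..(2*π), Complex.exp (Complex.I * (L:ℂ) * φ)) =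
      if L = 0 then ((2*π:ℝ):ℂ) else 0 := by
  rcases eq_or_ne L 0 with h | h
  · rw [if_pos h, h]
    simp only [Int.cast_zero, mul_zero, zero_mul, Complex.exp_zero]
    rw [intervalIntegral.integral_const]
    simp
  · have hc : Complex.I * (L:ℂ) ≠ 0 :=
      mul_ne_zero Complex.I_ne_zero (by exact_mod_cast h)
    rw [if_neg h]
    have key := integral_exp_mul_complex (a := (0:ℝ)) (b := 2*π) hc
    have harg : ∀ φ : ℝ, Complex.I * (L:ℂ) * (φ:ℂ) = (Complex.I * (L:ℂ)) * (φ:ℂ) := fun _ => by ring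
    simp only [harg] at *
    rw [key]
    have h1 : Complex.I * (L:ℂ) * ((2*π : ℝ):ℂ) = (L:ℂ) * (2 * (π:ℂ) * Complex.I) := by
      push_cast; ring
    rw [h1, Complex.exp_int_mul_two_pi_mul_I]
    simp


lemma sqrt_fact_ne (n : ℕ) : ((Real.sqrt (Nat.factorial n) : ℝ) : ℂ) ≠ 0 := by
  have : (0:ℝ) < Real.sqrt (Nat.factorial n) :=
    Real.sqrt_pos.mpr (by exact_mod_cast Nat.factorial_pos n)
  exact_mod_cast this.ne'

lemma one_le_sqrt_fact (n : ℕ) : (1:ℝ) ≤ Real.sqrt (Nat.factorial n) := by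
  rw [show (1:ℝ) = Real.sqrt 1 by simp]
  apply Real.sqrt_le_sqrt
  exact_mod_cast Nat.one_le_iff_ne_zero.mpr (Nat.factorial_pos n).ne'

lemma extraction (c : ℕ × ℕ → ℂ) (M : ℝ) (hc : ∀ p, ‖c p‖ ≤ M)
    (h : ∀ z : ℂ, ∑' p : ℕ × ℕ, coeff z p.1 * ((starRingEnd ℂ) (coeff z p.2) * c p) = 0) :
    ∀ p, c p = 0 := by
  have hM : 0 ≤ M := le_trans (norm_nonneg _) (hc (0,0))
  rintro ⟨n₀, m₀⟩
  set j := min n₀ m₀ with hj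
  set n₁ := n₀ - j with hn₁
  set m₁ := m₀ - j with hm₁
  set i : ℕ → ℕ × ℕ := fun q => (q + n₁, q + m₁) with hidef
  have hinj : Function.Injective i := by
    intro a b hab
    have := congrArg Prod.fst hab
    simp only [hidef] at this
    omega
  set b : ℕ → ℂ := fun q => c (i q) /
      ((Real.sqrt (Nat.factorial (q+n₁)) : ℂ) * (Real.sqrt (Nat.factorial (q+m₁)) : ℂ)) with hbdef
  have main : ∀ r : ℝ, r ∈ Set.Ioc (0:ℝ) 1 → ∑' q : ℕ, b q * ((r^2 : ℝ):ℂ)^q = 0 := by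
    intro r hr
    obtain ⟨hr0, hr1⟩ := hr
    set μ : Measure ℝ := volume.restrict (Set.Ioc (0:ℝ) (2*π)) with hμdef
    set z : ℝ → ℂ := fun φ => (r:ℂ) * Complex.exp (Complex.I * φ) with hzdef
    set L : ℕ × ℕ → ℤ := fun p => (p.1 : ℤ) - p.2 + m₁ - n₁ with hLdef
    set g : ℕ × ℕ → ℝ → ℂ := fun p φ =>
      (coeff (z φ) p.1 * ((starRingEnd ℂ) (coeff (z φ) p.2) * c p)) *
        Complex.exp (Complex.I * (((m₁:ℝ) - (n₁:ℝ) : ℝ):ℂ) * φ) with hgdef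
    have hcoeff : ∀ (n : ℕ) (φ : ℝ), coeff (z φ) n =
        (r:ℂ)^n / (Real.sqrt (Nat.factorial n) : ℂ) * Complex.exp ((n:ℂ) * (Complex.I * φ)) := by
      intro n φ
      rw [coeff, hzdef]
      simp only
      rw [mul_pow, ← Complex.exp_nat_mul]
      ring
    have hconj : ∀ (m : ℕ) (φ : ℝ), (starRingEnd ℂ) (coeff (z φ) m) =
        (r:ℂ)^m / (Real.sqrt (Nat.factorial m) : ℂ) *
          Complex.exp (-((m:ℂ) * (Complex.I * φ))) := by
      intro m φ
      rw [hcoeff m φ, map_mul, map_div₀, map_pow, Complex.conj_ofReal, Complex.conj_ofReal,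
        ← Complex.exp_conj]
      congr 2
      simp only [map_mul, map_natCast, Complex.conj_I, Complex.conj_ofReal]
      ring
    have hg : ∀ (p : ℕ × ℕ) (φ : ℝ), g p φ =
        ((r:ℂ)^p.1 * (r:ℂ)^p.2 /
          ((Real.sqrt (Nat.factorial p.1) : ℂ) * (Real.sqrt (Nat.factorial p.2) : ℂ)) * c p) *
          Complex.exp (Complex.I * ((L p : ℤ):ℂ) * φ) := by
      rintro ⟨n, m⟩ φ
      simp only [hgdef, hcoeff n φ, hconj m φ]
      have key : Complex.exp ((n:ℂ) * (Complex.I * φ)) *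
          Complex.exp (-((m:ℂ) * (Complex.I * φ))) *
          Complex.exp (Complex.I * (((m₁:ℝ) - (n₁:ℝ) : ℝ):ℂ) * φ) =
          Complex.exp (Complex.I * ((L (n,m) : ℤ):ℂ) * φ) := by
        rw [← Complex.exp_add, ← Complex.exp_add]
        congr 1
        simp only [hLdef]
        push_cast
        ring
      rw [← key]
      ring
    have hptsum : ∀ φ : ℝ, ∑' p : ℕ × ℕ, g p φ = 0 := by
      intro φ
      simp only [hgdef]
      rw [tsum_mul_right, h (z φ), zero_mul]
    have hzcont : Continuous z := by
      apply continuous_const.mul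
      exact Complex.continuous_exp.comp (continuous_const.mul Complex.continuous_ofReal)
    have hgcont : ∀ p : ℕ × ℕ, Continuous (g p) := by
      intro p
      apply Continuous.mul
      · apply Continuous.mul
        · exact ((hzcont.pow p.1).div_const _)
        · exact ((continuous_star.comp ((hzcont.pow p.2).div_const _)).mul continuous_const)
      · exact Complex.continuous_exp.comp
          ((continuous_const.mul continuous_const).mul Complex.continuous_ofReal)
    haveI hIoc : IsFiniteMeasure μ := by
      constructor
      rw [hμdef, Measure.restrict_apply_univ, Real.volume_Ioc]
      exact ENNReal.ofReal_lt_top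
    have hgint : ∀ p : ℕ × ℕ, Integrable (g p) μ := fun p => (hgcont p).integrableOn_Ioc
    have hexpnorm : ∀ (p : ℕ × ℕ) (φ : ℝ), ‖Complex.exp (Complex.I * ((L p : ℤ):ℂ) * φ)‖ = 1 := by
      intro p φ
      have harg : Complex.I * ((L p : ℤ):ℂ) * φ = ((((L p : ℤ):ℝ) * φ : ℝ):ℂ) * Complex.I := by
        push_cast; ring
      rw [harg, Complex.norm_exp_ofReal_mul_I]
    have hfacnorm : ∀ p : ℕ × ℕ,
        ‖(r:ℂ)^p.1 * (r:ℂ)^p.2 /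
          ((Real.sqrt (Nat.factorial p.1) : ℂ) * (Real.sqrt (Nat.factorial p.2) : ℂ)) * c p‖ =
        ‖coeff (r:ℂ) p.1‖ * ‖coeff (r:ℂ) p.2‖ * ‖c p‖ := by
      intro p
      rw [norm_coeff, norm_coeff]
      simp only [norm_mul, norm_div, norm_pow, Complex.norm_real, Real.norm_eq_abs,
        abs_of_nonneg, Real.sqrt_nonneg, hr0.le]
      ring
    have hbound : ∀ p : ℕ × ℕ, (∫ φ, ‖g p φ‖ ∂μ) ≤
        (2*π) * (‖coeff (r:ℂ) p.1‖ * ‖coeff (r:ℂ) p.2‖ * M) := by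
      intro p
      have hptle : ∀ φ : ℝ, ‖g p φ‖ ≤ ‖coeff (r:ℂ) p.1‖ * ‖coeff (r:ℂ) p.2‖ * M := by
        intro φ
        rw [hg, norm_mul, hexpnorm, mul_one, hfacnorm]
        exact mul_le_mul_of_nonneg_left (hc p)
          (mul_nonneg (norm_nonneg _) (norm_nonneg _))
      calc (∫ φ, ‖g p φ‖ ∂μ) ≤
          ∫ _, (‖coeff (r:ℂ) p.1‖ * ‖coeff (r:ℂ) p.2‖ * M) ∂μ := by
            apply integral_mono (hgint p).norm (integrable_const _) hptle
        _ = (2*π) * (‖coeff (r:ℂ) p.1‖ * ‖coeff (r:ℂ) p.2‖ * M) := by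
            rw [integral_const, smul_eq_mul]
            congr 1
            rw [hμdef, Measure.real, Measure.restrict_apply_univ, Real.volume_Ioc, sub_zero,
              ENNReal.toReal_ofReal (by positivity)]
    have hSumm : Summable (fun p : ℕ × ℕ => ∫ φ, ‖g p φ‖ ∂μ) := by
      have base : Summable (fun p : ℕ × ℕ => ‖coeff (r:ℂ) p.1‖ * ‖coeff (r:ℂ) p.2‖) :=
        (summable_norm_coeff (r:ℂ)).mul_of_nonneg (summable_norm_coeff (r:ℂ))
          (fun n => norm_nonneg _) (fun n => norm_nonneg _)
      refine (((base.mul_right M).mul_left (2*π))).of_nonneg_of_le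
        (fun p => integral_nonneg (fun φ => norm_nonneg _)) (fun p => ?_)
      exact hbound p
    have hswap := integral_tsum_of_summable_integral_norm hgint hSumm
    simp only [hptsum, integral_zero] at hswap
    have hval : ∀ p : ℕ × ℕ, (∫ φ, g p φ ∂μ) =
        ((r:ℂ)^p.1 * (r:ℂ)^p.2 /
          ((Real.sqrt (Nat.factorial p.1) : ℂ) * (Real.sqrt (Nat.factorial p.2) : ℂ)) * c p) *
          (if L p = 0 then ((2*π:ℝ):ℂ) else 0) := by
      intro p
      rw [hμdef, ← intervalIntegral.integral_of_le (by positivity : (0:ℝ) ≤ 2*π)]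
      have : ∀ φ : ℝ, g p φ =
          ((r:ℂ)^p.1 * (r:ℂ)^p.2 /
            ((Real.sqrt (Nat.factorial p.1) : ℂ) * (Real.sqrt (Nat.factorial p.2) : ℂ)) * c p) *
            Complex.exp (Complex.I * ((L p : ℤ):ℂ) * φ) := fun φ => hg p φ
      simp only [this]
      rw [intervalIntegral.integral_const_mul, integral_exp_I]
    have hsupp : (Function.support fun p : ℕ × ℕ =>
        ((r:ℂ)^p.1 * (r:ℂ)^p.2 /
          ((Real.sqrt (Nat.factorial p.1) : ℂ) * (Real.sqrt (Nat.factorial p.2) : ℂ)) * c p) *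
          (if L p = 0 then ((2*π:ℝ):ℂ) else 0)) ⊆ Set.range i := by
      intro p hp
      have hL : L p = 0 := by
        by_contra hL
        simp [hL] at hp
      obtain ⟨pn, pm⟩ := p
      have hL' : (pn : ℤ) - pm + m₁ - n₁ = 0 := hL
      have hone : n₁ = 0 ∨ m₁ = 0 := by omega
      rcases hone with h1 | h1
      · exact ⟨pn, by simp only [hidef, Prod.mk.injEq]; omega⟩
      · exact ⟨pm, by simp only [hidef, Prod.mk.injEq]; omega⟩
    have hzero : ∑' q : ℕ, (((r:ℂ)^(i q).1 * (r:ℂ)^(i q).2 /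
          ((Real.sqrt (Nat.factorial (i q).1) : ℂ) * (Real.sqrt (Nat.factorial (i q).2) : ℂ)) * c (i q)) *
          (if L (i q) = 0 then ((2*π:ℝ):ℂ) else 0)) = 0 := by
      rw [hinj.tsum_eq hsupp, tsum_congr fun p => (hval p).symm]
      exact hswap
    have hLzero : ∀ q : ℕ, L (i q) = 0 := by
      intro q
      simp only [hLdef, hidef]
      omega
    have hq : ∀ q : ℕ, (((r:ℂ)^(i q).1 * (r:ℂ)^(i q).2 /
          ((Real.sqrt (Nat.factorial (i q).1) : ℂ) * (Real.sqrt (Nat.factorial (i q).2) : ℂ)) * c (i q)) *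
          (if L (i q) = 0 then ((2*π:ℝ):ℂ) else 0)) =
        (((2*π:ℝ):ℂ) * (r:ℂ)^(n₁+m₁)) * (b q * ((r^2 : ℝ):ℂ)^q) := by
      intro q
      rw [if_pos (hLzero q)]
      simp only [hidef, hbdef]
      rw [Complex.ofReal_pow]
      field_simp
      ring
    simp only [hq, tsum_mul_left] at hzero
    rcases mul_eq_zero.mp hzero with h' | h'
    · exfalso
      rcases mul_eq_zero.mp h' with h'' | h''
      · have : (2*π : ℝ) ≠ 0 := by positivity
        exact this (by exact_mod_cast h'')
      · exact (pow_ne_zero _ (by exact_mod_cast hr0.ne' : ((r:ℂ)) ≠ 0)) h''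
    · exact h'
  have hbsum : Summable fun q => ‖b q‖ := by
    refine ((summable_norm_coeff (1:ℂ)).mul_left M).of_nonneg_of_le
      (fun q => norm_nonneg _) (fun q => ?_)
    have hnc : ‖coeff (1:ℂ) q‖ = 1 / Real.sqrt (Nat.factorial q) := by
      rw [norm_coeff, norm_one, one_pow]
    rw [hnc, hbdef]
    simp only
    rw [norm_div, norm_mul, Complex.norm_real, Complex.norm_real, Real.norm_eq_abs,
      Real.norm_eq_abs, abs_of_nonneg (Real.sqrt_nonneg _), abs_of_nonneg (Real.sqrt_nonneg _)]
    rw [mul_one_div, div_le_div_iff₀ (by positivity) (by positivity)]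
    calc ‖c (i q)‖ * Real.sqrt (Nat.factorial q)
        ≤ M * Real.sqrt (Nat.factorial q) :=
          mul_le_mul_of_nonneg_right (hc _) (Real.sqrt_nonneg _)
      _ ≤ M * (Real.sqrt (Nat.factorial (q+n₁)) * Real.sqrt (Nat.factorial (q+m₁))) := by
          apply mul_le_mul_of_nonneg_left _ hM
          calc Real.sqrt (Nat.factorial q)
              ≤ Real.sqrt (Nat.factorial (q+n₁)) := by
                apply Real.sqrt_le_sqrt
                exact_mod_cast Nat.factorial_le (by omega)
            _ = Real.sqrt (Nat.factorial (q+n₁)) * 1 := (mul_one _).symm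
            _ ≤ _ := mul_le_mul_of_nonneg_left (one_le_sqrt_fact _) (Real.sqrt_nonneg _)
  have hball : ∀ s : ℝ, s ∈ Set.Ioc (0:ℝ) 1 → ∑' q, b q * (s:ℂ)^q = 0 := by
    intro s hs
    have hsq : Real.sqrt s ∈ Set.Ioc (0:ℝ) 1 :=
      ⟨Real.sqrt_pos.mpr hs.1, by
        rw [show (1:ℝ) = Real.sqrt 1 by simp]
        exact Real.sqrt_le_sqrt hs.2⟩
    have := main (Real.sqrt s) hsq
    rwa [Real.sq_sqrt hs.1.le] at this
  have hbj : b j = 0 := ps_all j b hbsum hball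
  have hij : i j = (n₀, m₀) := by
    simp only [hidef, Prod.mk.injEq]
    omega
  rw [hbdef] at hbj
  simp only at hbj
  rcases div_eq_zero_iff.mp hbj with h' | h'
  · rwa [hij] at h'
  · exact absurd h' (mul_ne_zero (sqrt_fact_ne _) (sqrt_fact_ne _))

variable {H : Type*} [NormedAddCommGroup H] [InnerProductSpace ℂ H] [CompleteSpace H]
variable (e : HilbertBasis ℕ ℂ H)

lemma summable_coeff_smul (z : ℂ) (v : ℕ → H) (C : ℝ) (hv : ∀ n, ‖v n‖ ≤ C) :
    Summable (fun n => coeff z n • v n) := by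
  apply Summable.of_norm
  refine ((summable_norm_coeff z).mul_right C).of_nonneg_of_le
    (fun n => norm_nonneg _) (fun n => ?_)
  rw [norm_smul]
  exact mul_le_mul_of_nonneg_left (hv n) (norm_nonneg _)

noncomputable def psi (z : ℂ) : H := ∑' n, coeff z n • e n

lemma norm_e (n : ℕ) : ‖e n‖ = 1 := e.orthonormal.1 n

lemma summable_coeff_e (z : ℂ) : Summable (fun n => coeff z n • e n) :=
  summable_coeff_smul z _ 1 (fun n => le_of_eq (norm_e e n))

lemma map_psi (R : ℝ → (H →L[ℂ] H))
    (hR : ∀ θ : ℝ, ∀ n : ℕ, R θ (e n) = Complex.exp (Complex.I * n * θ) • e n)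
    (θ : ℝ) (z : ℂ) :
    R θ (psi e z) = psi e (z * Complex.exp (Complex.I * θ)) := by
  rw [psi, (R θ).map_tsum (summable_coeff_e e z), psi]
  congr 1
  ext n
  rw [(R θ).map_smul, hR θ n, smul_smul]
  congr 1
  rw [coeff, coeff, mul_pow]
  have : Complex.exp (Complex.I * θ) ^ n = Complex.exp (Complex.I * n * θ) := by
    rw [← Complex.exp_nat_mul]; ring_nf
  rw [this]; ring

lemma coherentState_eq (z : ℂ) :
    coherentState e z = (Real.exp (-(‖z‖) ^ 2 / 2) : ℂ) • psi e z := rfl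

lemma coherent_shift (R : ℝ → (H →L[ℂ] H))
    (hR : ∀ θ : ℝ, ∀ n : ℕ, R θ (e n) = Complex.exp (Complex.I * n * θ) • e n)
    (θ : ℝ) (z : ℂ) :
    coherentState e (z * Complex.exp (-(Complex.I * θ))) = R (-θ) (coherentState e z) := by
  rw [coherentState_eq, coherentState_eq, (R (-θ)).map_smul, map_psi e R hR]
  have h1 : z * Complex.exp (Complex.I * ((-θ : ℝ) : ℂ)) = z * Complex.exp (-(Complex.I * θ)) := by
    push_cast; ring_nf
  have h2 : ‖z * Complex.exp (-(Complex.I * θ))‖ = ‖z‖ := by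
    rw [norm_mul, Complex.norm_exp]
    simp
  rw [h1, h2]

lemma vec_ext {x y : H} (h : ∀ m, (inner ℂ (e m) x : ℂ) = inner ℂ (e m) y) : x = y := by
  apply e.repr.injective
  ext m
  rw [e.repr_apply_apply, e.repr_apply_apply]
  exact h m

lemma clm_ext {A B : H →L[ℂ] H} (h : ∀ n, A (e n) = B (e n)) : A = B := by
  apply ContinuousLinearMap.ext_on
    (Submodule.dense_iff_topologicalClosure_eq_top.mpr e.dense_span)
  rintro _ ⟨n, rfl⟩
  exact h n

lemma clm_ext_inner {A B : H →L[ℂ] H}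
    (h : ∀ m n, (inner ℂ (e m) (A (e n)) : ℂ) = inner ℂ (e m) (B (e n))) : A = B :=
  clm_ext e fun n => vec_ext e fun m => h m n

lemma norm_inner_le (A : H →L[ℂ] H) (m n : ℕ) : ‖(inner ℂ (e m) (A (e n)) : ℂ)‖ ≤ ‖A‖ := by
  calc ‖(inner ℂ (e m) (A (e n)) : ℂ)‖ ≤ ‖e m‖ * ‖A (e n)‖ := norm_inner_le_norm _ _
    _ ≤ 1 * (‖A‖ * ‖e n‖) :=
      mul_le_mul (le_of_eq (norm_e e m)) (A.le_opNorm _) (norm_nonneg _) zero_le_one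
    _ = ‖A‖ := by rw [norm_e e n]; ring

lemma inner_psi_left (z : ℂ) (w : H) :
    (inner ℂ (psi e z) w : ℂ) = ∑' m, (starRingEnd ℂ) (coeff z m) * inner ℂ (e m) w := by
  rw [← inner_conj_symm]
  have h1 : (inner ℂ w (psi e z) : ℂ) = ∑' m, coeff z m * inner ℂ w (e m) := by
    have h := (innerSL ℂ w).map_tsum (summable_coeff_e e z)
    simp only [innerSL_apply_apply] at h
    rw [psi, h]
    simp only [inner_smul_right]
  rw [h1, starRingEnd_apply, tsum_star]
  congr 1; ext m
  rw [star_mul', ← starRingEnd_apply, ← starRingEnd_apply, inner_conj_symm]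

lemma inner_psi_apply (A : H →L[ℂ] H) (z : ℂ) :
    (inner ℂ (psi e z) (A (psi e z)) : ℂ) =
      ∑' p : ℕ × ℕ, coeff z p.1 *
        ((starRingEnd ℂ) (coeff z p.2) * inner ℂ (e p.2) (A (e p.1))) := by
  have hb : ∀ n, ‖A (e n)‖ ≤ ‖A‖ := fun n => by
    simpa [norm_e e n] using A.le_opNorm (e n)
  have hs2 : Summable (fun n => coeff z n • A (e n)) := summable_coeff_smul z _ ‖A‖ hb
  have step1 : A (psi e z) = ∑' n, coeff z n • A (e n) := by
    rw [psi, A.map_tsum (summable_coeff_e e z)]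
    simp only [A.map_smul]
  have step2 : (inner ℂ (psi e z) (A (psi e z)) : ℂ)
      = ∑' n, coeff z n * inner ℂ (psi e z) (A (e n)) := by
    have h := (innerSL ℂ (psi e z)).map_tsum hs2
    simp only [innerSL_apply_apply] at h
    rw [step1, h]
    simp only [inner_smul_right]
  have hsum : Summable (fun p : ℕ × ℕ => coeff z p.1 *
      ((starRingEnd ℂ) (coeff z p.2) * inner ℂ (e p.2) (A (e p.1)))) := by
    apply Summable.of_norm
    have base : Summable (fun p : ℕ × ℕ => ‖coeff z p.1‖ * ‖coeff z p.2‖) :=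
      (summable_norm_coeff z).mul_of_nonneg (summable_norm_coeff z)
        (fun n => norm_nonneg _) (fun n => norm_nonneg _)
    refine (base.mul_right ‖A‖).of_nonneg_of_le (fun p => norm_nonneg _) (fun p => ?_)
    rw [norm_mul, norm_mul, starRingEnd_apply, norm_star, mul_assoc]
    exact mul_le_mul_of_nonneg_left
      (mul_le_mul_of_nonneg_left (norm_inner_le e A _ _) (norm_nonneg _)) (norm_nonneg _)
  rw [step2, hsum.tsum_prod]
  congr 1; ext n
  rw [inner_psi_left e z (A (e n)), ← tsum_mul_left]


end StmtAux

/-- A POM `E` on the Borel subsets of `[0,2π)` is phase shift covariant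
(`R(θ) E(X) R(θ)* = E(X ⊕ θ)`) if and only if all coherent state probability
measures satisfy the covariance condition
`p_{|z e^{-iθ}⟩}(X) = p_{|z⟩}(X ⊕ θ)`. -/
theorem stmt2 {H : Type*} [NormedAddCommGroup H] [InnerProductSpace ℂ H] [CompleteSpace H]
    (e : HilbertBasis ℕ ℂ H)
    (R : ℝ → (H →L[ℂ] H))
    (hR : ∀ θ : ℝ, ∀ n : ℕ, R θ (e n) = Complex.exp (Complex.I * n * θ) • e n)
    (hRadj : ∀ θ : ℝ, ContinuousLinearMap.adjoint (R θ) = R (-θ))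
    (E : Set ℝ → (H →L[ℂ] H))
    -- POM assumptions: positivity, normalization, weak σ-additivity
    (hpos : ∀ X : Set ℝ, MeasurableSet X → X ⊆ Set.Ico 0 (2 * π) → (E X).IsPositive)
    (hnorm : E (Set.Ico 0 (2 * π)) = 1)
    (hadd : ∀ f : ℕ → Set ℝ, (∀ n, MeasurableSet (f n)) →
      (∀ n, f n ⊆ Set.Ico 0 (2 * π)) → Pairwise (Function.onFun Disjoint f) →
      ∀ φ ψ : H, HasSum (fun n => (inner ℂ φ (E (f n) ψ) : ℂ)) (inner ℂ φ (E (⋃ n, f n) ψ))) :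
    (∀ X : Set ℝ, MeasurableSet X → X ⊆ Set.Ico 0 (2 * π) → ∀ θ : ℝ,
        (R θ) ∘L (E X) ∘L ContinuousLinearMap.adjoint (R θ) = E (shiftSet X θ)) ↔
    (∀ z : ℂ, ∀ θ ∈ Set.Ico (0 : ℝ) (2 * π), ∀ X : Set ℝ, MeasurableSet X →
        X ⊆ Set.Ico 0 (2 * π) →
        (inner ℂ (coherentState e (z * Complex.exp (-(Complex.I * θ))))
            (E X (coherentState e (z * Complex.exp (-(Complex.I * θ))))) : ℂ) =
        (inner ℂ (coherentState e z) (E (shiftSet X θ) (coherentState e z)) : ℂ)) := by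
  constructor
  · -- covariance implies coherent state condition
    intro hcov z θ hθ X hX hXsub
    rw [StmtAux.coherent_shift e R hR θ z]
    have h1 : ContinuousLinearMap.adjoint (R (-θ)) = R θ := by rw [hRadj (-θ), neg_neg]
    calc (inner ℂ (R (-θ) (coherentState e z)) (E X (R (-θ) (coherentState e z))) : ℂ)
        = inner ℂ (coherentState e z)
            (ContinuousLinearMap.adjoint (R (-θ)) (E X (R (-θ) (coherentState e z)))) :=
          (ContinuousLinearMap.adjoint_inner_right _ _ _).symm
      _ = inner ℂ (coherentState e z)
            (((R θ) ∘L (E X) ∘L ContinuousLinearMap.adjoint (R θ)) (coherentState e z)) := by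
          rw [h1, ContinuousLinearMap.comp_apply, ContinuousLinearMap.comp_apply, hRadj θ]
      _ = inner ℂ (coherentState e z) (E (shiftSet X θ) (coherentState e z)) := by
          rw [hcov X hX hXsub θ]
  · -- coherent state condition implies covariance
    intro hcs X hX hXsub θ
    have key : ∀ θ' : ℝ, θ' ∈ Set.Ico (0:ℝ) (2*π) →
        (R θ') ∘L (E X) ∘L ContinuousLinearMap.adjoint (R θ') = E (shiftSet X θ') := by
      intro θ' hθ'
      set D := (R θ') ∘L (E X) ∘L ContinuousLinearMap.adjoint (R θ') - E (shiftSet X θ')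
        with hD
      have h1 : ContinuousLinearMap.adjoint (R (-θ')) = R θ' := by rw [hRadj (-θ'), neg_neg]
      have hzero : ∀ z : ℂ, (inner ℂ (StmtAux.psi e z) (D (StmtAux.psi e z)) : ℂ) = 0 := by
        intro z
        have hcz := hcs z θ' hθ' X hX hXsub
        rw [StmtAux.coherent_shift e R hR θ' z] at hcz
        have h2 : (inner ℂ (R (-θ') (coherentState e z)) (E X (R (-θ') (coherentState e z))) : ℂ)
            = inner ℂ (coherentState e z)
                (((R θ') ∘L (E X) ∘L ContinuousLinearMap.adjoint (R θ')) (coherentState e z)) := by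
          rw [ContinuousLinearMap.comp_apply, ContinuousLinearMap.comp_apply, hRadj θ', ← h1]
          exact (ContinuousLinearMap.adjoint_inner_right _ _ _).symm
        rw [h2] at hcz
        have h3 : (inner ℂ (coherentState e z) (D (coherentState e z)) : ℂ) = 0 := by
          rw [hD, ContinuousLinearMap.sub_apply, inner_sub_right, hcz, sub_self]
        rw [StmtAux.coherentState_eq e z, D.map_smul, inner_smul_left, inner_smul_right] at h3
        rcases mul_eq_zero.mp h3 with h' | h'
        · exfalso
          rw [Complex.conj_ofReal] at h'
          exact Complex.ofReal_ne_zero.mpr (Real.exp_ne_zero _) h'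
        · rcases mul_eq_zero.mp h' with h'' | h''
          · exact absurd h'' (Complex.ofReal_ne_zero.mpr (Real.exp_ne_zero _))
          · exact h''
      have ht : ∀ p : ℕ × ℕ, (inner ℂ (e p.2) (D (e p.1)) : ℂ) = 0 := by
        apply StmtAux.extraction (fun p : ℕ × ℕ => (inner ℂ (e p.2) (D (e p.1)) : ℂ)) ‖D‖
          (fun p => StmtAux.norm_inner_le e D p.2 p.1)
        intro z
        rw [← StmtAux.inner_psi_apply e D z]
        exact hzero z
      have hD0 : D = 0 := by
        apply StmtAux.clm_ext_inner e
        intro m n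
        simp only [ContinuousLinearMap.zero_apply, inner_zero_right]
        exact ht (n, m)
      have hsub : (R θ') ∘L (E X) ∘L ContinuousLinearMap.adjoint (R θ') - E (shiftSet X θ')
          = 0 := by rw [← hD]; exact hD0
      exact sub_eq_zero.mp hsub
    have hpos2 : (0:ℝ) < 2*π := by positivity
    set k : ℤ := ⌊θ / (2*π)⌋ with hk
    set θ' : ℝ := θ - 2*π*k with hθ'def
    have hfract : θ' = 2*π * Int.fract (θ/(2*π)) := by
      rw [Int.fract, hθ'def, hk]
      field_simp
    have hθ'mem : θ' ∈ Set.Ico (0:ℝ) (2*π) := by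
      rw [hfract]
      constructor
      · exact mul_nonneg hpos2.le (Int.fract_nonneg _)
      · calc 2*π * Int.fract (θ/(2*π)) < 2*π*1 :=
            mul_lt_mul_of_pos_left (Int.fract_lt_one _) hpos2
          _ = 2*π := mul_one _
    have hshift : shiftSet X θ = shiftSet X θ' := by
      have hf : ∀ x : ℝ, Int.fract ((x - θ)/(2*π)) = Int.fract ((x - θ')/(2*π)) := by
        intro x
        have hx : (x - θ)/(2*π) = (x - θ')/(2*π) - k := by
          rw [hθ'def]
          field_simp
          ring
        rw [hx, Int.fract_sub_intCast]
      ext x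
      simp only [shiftSet, Set.mem_setOf_eq, hf x]
    have hRθ : R θ = R θ' := by
      apply StmtAux.clm_ext e
      intro n
      rw [hR θ n, hR θ' n]
      congr 1
      have hθeq : (θ:ℂ) = (θ':ℂ) + 2*(π:ℂ)*(k:ℂ) := by
        have hre : θ = θ' + 2*π*(k:ℝ) := by rw [hθ'def]; ring
        exact_mod_cast hre
      rw [hθeq, mul_add, Complex.exp_add]
      have hint : Complex.I * (n:ℂ) * (2*(π:ℂ)*(k:ℂ)) = (((n:ℤ)*k : ℤ):ℂ) * (2*(π:ℂ)*Complex.I) := by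
        push_cast
        ring
      rw [hint, Complex.exp_int_mul_two_pi_mul_I, mul_one]
    rw [hshift, hRθ]
    exact key θ' hθ'mem
end

section
/- For any covariant phase observable E with phase matrix (c_{n,m}) and any number state |n⟩, the variance of the first moment operator E^{(1)} satisfies ⟨n|(E^{(1)})²|n⟩ − ⟨n|E^{(1)}|n⟩² = ∑_{m≠n} |c_{n,m}|²/(n−m)² < π²/3; hence the spectral measure of E^{(1)} is never completely random (variance π²/3) in a number state. -/
open scoped Real

/-- For a covariant phase observable with phase matrix `(c_{n,m})`, the variance of
the first moment operator `E⁽¹⁾` in a number state `|n⟩` equals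
`∑_{m≠n} |c_{n,m}|²/(n−m)²`, which is strictly less than `π²/3`; hence the spectral
measure of `E⁽¹⁾` is never completely random in a number state. -/
theorem stmt7 {H : Type*} [NormedAddCommGroup H] [InnerProductSpace ℂ H] [CompleteSpace H]
    (e : HilbertBasis ℕ ℂ H) (c : ℕ → ℕ → ℂ)
    -- `(c_{n,m})` is a phase matrix: positive semidefinite with unit diagonal
    (hpsd : ∀ (F : Finset ℕ) (t : ℕ → ℂ),
      0 ≤ (∑ n ∈ F, ∑ m ∈ F, starRingEnd ℂ (t n) * c n m * t m).re ∧
      (∑ n ∈ F, ∑ m ∈ F, starRingEnd ℂ (t n) * c n m * t m).im = 0)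
    (hdiag : ∀ n, c n n = 1)
    -- `T` is the (bounded self-adjoint) first moment operator `E⁽¹⁾`
    (T : H →L[ℂ] H) (hsa : IsSelfAdjoint T)
    (hTd : ∀ n : ℕ, (inner ℂ (e n) (T (e n)) : ℂ) = (π : ℂ))
    (hTod : ∀ n m : ℕ, n ≠ m →
      (inner ℂ (e n) (T (e m)) : ℂ) = c n m / (Complex.I * ((n : ℂ) - m))) :
    ∀ n : ℕ,
      ((inner ℂ (e n) (T (T (e n))) : ℂ).re - ((inner ℂ (e n) (T (e n)) : ℂ).re) ^ 2
          = ∑' m : ℕ, (if m = n then 0 else ‖c n m‖ ^ 2 / ((n : ℝ) - m) ^ 2)) ∧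
      (∑' m : ℕ, (if m = n then 0 else ‖c n m‖ ^ 2 / ((n : ℝ) - m) ^ 2)) < π ^ 2 / 3 := by
  -- the 2×2 principal submatrix condition
  have key : ∀ p q : ℕ, p ≠ q → ∀ z : ℂ,
      0 ≤ (1 + c p q * z + (starRingEnd ℂ) z * c q p + (starRingEnd ℂ) z * z).re ∧
        (1 + c p q * z + (starRingEnd ℂ) z * c q p + (starRingEnd ℂ) z * z).im = 0 := by
    intro p q hpq z
    have h := hpsd {p, q} (fun k => if k = p then 1 else if k = q then z else 0)
    rw [show ({p, q} : Finset ℕ) = insert p {q} from rfl] at h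
    rw [Finset.sum_insert (by simpa using hpq), Finset.sum_singleton,
      Finset.sum_insert (by simpa using hpq), Finset.sum_singleton,
      Finset.sum_insert (by simpa using hpq), Finset.sum_singleton] at h
    simp only [eq_self_iff_true, if_true, if_neg hpq, if_neg hpq.symm, hdiag, map_one, mul_one, one_mul] at h
    convert h using 3 <;> ring
  -- hermiticity of the phase matrix
  have hherm : ∀ p q : ℕ, p ≠ q → c q p = (starRingEnd ℂ) (c p q) := by
    intro p q hpq
    have h1 := (key p q hpq 1).2
    have h2 := (key p q hpq Complex.I).2
    simp only [Complex.add_im, Complex.one_im, Complex.mul_im, Complex.one_re,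
      Complex.I_re, Complex.I_im, map_one, Complex.conj_I, Complex.neg_im,
      Complex.neg_re, Complex.mul_re] at h1 h2
    apply Complex.ext <;> simp only [Complex.conj_re, Complex.conj_im] <;> nlinarith [h1, h2]
  -- the entries have modulus at most 1
  have hbound : ∀ p q : ℕ, p ≠ q → ‖c p q‖ ≤ 1 := by
    intro p q hpq
    have h := (key p q hpq (-(starRingEnd ℂ) (c p q))).1
    rw [hherm p q hpq] at h
    simp only [map_neg, Complex.conj_conj, Complex.add_re, Complex.one_re, Complex.mul_re,
      Complex.neg_re, Complex.neg_im, Complex.conj_re, Complex.conj_im] at h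
    have hsq : ‖c p q‖ ^ 2 = (c p q).re ^ 2 + (c p q).im ^ 2 := by
      rw [Complex.sq_norm, Complex.normSq_apply]; ring
    nlinarith [h, norm_nonneg (c p q), hsq]
  -- symmetry of T
  have hsym : ∀ x y : H, (inner ℂ (T x) y : ℂ) = inner ℂ x (T y) := by
    intro x y
    conv_lhs => rw [← hsa.adjoint_eq]
    exact ContinuousLinearMap.adjoint_inner_left T y x
  intro n
  set a : ℕ → ℂ := fun m => (inner ℂ (e m) (T (e n)) : ℂ) with ha
  -- the squared moduli of the matrix elements
  have hval : ∀ m : ℕ, m ≠ n → ‖a m‖ ^ 2 = ‖c n m‖ ^ 2 / ((n : ℝ) - m) ^ 2 := by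
    intro m hm
    have h1 : a m = (starRingEnd ℂ) (inner ℂ (e n) (T (e m)) : ℂ) := by
      rw [ha]; simp only [← hsym (e m) (e n)]
      exact (inner_conj_symm _ _).symm
    have hne : (n : ℝ) ≠ (m : ℝ) := by exact_mod_cast fun h => hm.symm (Nat.cast_injective h)
    have h2 : ‖a m‖ = ‖c n m‖ / |(n : ℝ) - m| := by
      rw [h1, RCLike.norm_conj, hTod n m (fun h => hm h.symm), norm_div, norm_mul,
        Complex.norm_I, one_mul]
      congr 1
      rw [show ((n : ℂ) - m) = (((n : ℝ) - m : ℝ) : ℂ) by push_cast; ring,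
        Complex.norm_real, Real.norm_eq_abs]
    rw [h2, div_pow, sq_abs]
  have han : a n = (π : ℂ) := hTd n
  -- Parseval for T(e n)
  have hP : HasSum (fun m => ((starRingEnd ℂ) (a m) * a m))
      (inner ℂ (e n) (T (T (e n))) : ℂ) := by
    have h0 := e.hasSum_inner_mul_inner (T (e n)) (T (e n))
    have h1 : (inner ℂ (T (e n)) (T (e n)) : ℂ) = inner ℂ (e n) (T (T (e n))) :=
      hsym (e n) (T (e n))
    rw [h1] at h0
    convert h0 using 2 with m
    case e'_3 => rfl
    rw [ha]
    exact congrArg (· * _) (inner_conj_symm (T (e n)) (e m))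
  have hPre : HasSum (fun m => ‖a m‖ ^ 2) ((inner ℂ (e n) (T (T (e n))) : ℂ)).re := by
    have := Complex.hasSum_re hP
    convert this using 2 with m
    rw [show ((starRingEnd ℂ) (a m) * a m) = ((Complex.normSq (a m) : ℝ) : ℂ) by
      rw [mul_comm, Complex.mul_conj], Complex.ofReal_re, ← Complex.sq_norm]
  -- the variance series
  set g : ℕ → ℝ := fun m => if m = n then 0 else ‖c n m‖ ^ 2 / ((n : ℝ) - m) ^ 2 with hg
  have hgu : g = Function.update (fun m => ‖a m‖ ^ 2) n 0 := by
    funext m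
    by_cases hm : m = n
    · subst hm; simp [hg, Function.update_self]
    · rw [hg]; simp only [if_neg hm, Function.update_of_ne hm]
      exact (hval m hm).symm
  have hgs : HasSum g (0 - ‖a n‖ ^ 2 + ((inner ℂ (e n) (T (T (e n))) : ℂ)).re) := by
    rw [hgu]; exact hPre.update n 0
  have hanre : ‖a n‖ ^ 2 = π ^ 2 := by
    rw [han, Complex.norm_real, Real.norm_eq_abs, sq_abs]
  have hTdre : ((inner ℂ (e n) (T (e n)) : ℂ)).re = π := by rw [hTd n, Complex.ofReal_re]
  constructor
  · rw [hgs.tsum_eq, hTdre, hanre]; ring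
  -- the strict bound
  · set u : ℕ → ℝ := fun m => if m = n then 0 else 1 / ((n : ℝ) - m) ^ 2 with hu
    have hgle : ∀ m, g m ≤ u m := by
      intro m
      by_cases hm : m = n
      · simp [hg, hu, hm]
      · simp only [hg, hu, if_neg hm]
        have hne : (n : ℝ) - m ≠ 0 := by
          have : (n : ℝ) ≠ (m : ℝ) := by
            exact_mod_cast fun h => hm (Nat.cast_injective h).symm
          exact sub_ne_zero.mpr this
        have hd : (0 : ℝ) < ((n : ℝ) - m) ^ 2 :=
          lt_of_le_of_ne (sq_nonneg _) (Ne.symm (pow_ne_zero 2 hne))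
        exact (div_le_div_iff_of_pos_right hd).mpr
          (pow_le_one₀ (norm_nonneg _) (hbound n m (fun h => hm h.symm)))
    -- split u into the part below n and the part above n
    set u1 : ℕ → ℝ := fun m => if m < n then 1 / ((n : ℝ) - m) ^ 2 else 0 with hu1
    set u2 : ℕ → ℝ := fun m => if n < m then 1 / ((n : ℝ) - m) ^ 2 else 0 with hu2
    have huu : u = u1 + u2 := by
      funext m
      rcases lt_trichotomy m n with h | h | h
      · simp [hu, hu1, hu2, h, h.ne, not_lt.mpr h.le]
      · simp [hu, hu1, hu2, h]
      · simp [hu, hu1, hu2, h, h.ne', not_lt.mpr h.le]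
    have hF : HasSum (fun k : ℕ => 1 / ((k : ℝ) + 1) ^ 2) (π ^ 2 / 6) := by
      have h' : HasSum (fun k : ℕ => (1 : ℝ) / (k : ℝ) ^ 2)
          (π ^ 2 / 6 + ∑ i ∈ Finset.range 1, (1 : ℝ) / (i : ℝ) ^ 2) := by
        simpa using hasSum_zeta_two
      have h2 := (hasSum_nat_add_iff 1).2 h'
      convert h2 using 2 with k
      case e'_3 => rfl
      push_cast; ring
    have hs1 : HasSum u1 (∑ m ∈ Finset.range n, u1 m) :=
      hasSum_sum_of_ne_finset_zero (fun m hm => by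
        rw [Finset.mem_range, not_lt] at hm
        simp [hu1, not_lt.mpr hm])
    have hs1val : (∑ m ∈ Finset.range n, u1 m)
        = ∑ k ∈ Finset.range n, 1 / ((k : ℝ) + 1) ^ 2 := by
      rw [← Finset.sum_range_reflect (fun k => 1 / ((k : ℝ) + 1) ^ 2) n]
      apply Finset.sum_congr rfl
      intro m hm
      rw [Finset.mem_range] at hm
      simp only [hu1, if_pos hm]
      congr 2
      have : (n - 1 - m : ℕ) = n - (m + 1) := by omega
      rw [this, Nat.cast_sub (by omega)]
      push_cast; ring
    have hs2 : HasSum u2 (π ^ 2 / 6) := by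
      have h2 : HasSum (fun k : ℕ => u2 (k + (n + 1))) (π ^ 2 / 6) := by
        have heq : (fun k : ℕ => u2 (k + (n + 1))) = fun k : ℕ => 1 / ((k : ℝ) + 1) ^ 2 := by
          funext k
          simp only [hu2, if_pos (by omega : n < k + (n + 1))]
          have hb : ((n : ℝ) - ((k + (n + 1) : ℕ) : ℝ)) = -((k : ℝ) + 1) := by push_cast; ring
          rw [hb, neg_sq]
        rw [heq]; exact hF
      have h := (hasSum_nat_add_iff (n + 1)).1 h2
      have hz : ∑ i ∈ Finset.range (n + 1), u2 i = 0 := by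
        apply Finset.sum_eq_zero
        intro i hi
        rw [Finset.mem_range] at hi
        simp [hu2, if_neg (by omega : ¬ n < i)]
      rwa [hz, add_zero] at h
    have husum : HasSum u ((∑ m ∈ Finset.range n, u1 m) + π ^ 2 / 6) := by
      rw [huu]; exact hs1.add hs2
    have hP1 : (∑ m ∈ Finset.range n, u1 m) < π ^ 2 / 6 := by
      rw [hs1val]
      have hle : ∑ k ∈ Finset.range (n + 1), 1 / ((k : ℝ) + 1) ^ 2 ≤ π ^ 2 / 6 :=
        sum_le_hasSum _ (fun k _ => by positivity) hF
      rw [Finset.sum_range_succ] at hle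
      have : (0 : ℝ) < 1 / ((n : ℝ) + 1) ^ 2 := by positivity
      linarith
    have htle : (∑' m, g m) ≤ ∑' m, u m :=
      Summable.tsum_le_tsum hgle hgs.summable husum.summable
    rw [husum.tsum_eq] at htle
    calc (∑' m, g m) ≤ (∑ m ∈ Finset.range n, u1 m) + π ^ 2 / 6 := htle
      _ < π ^ 2 / 6 + π ^ 2 / 6 := by linarith
      _ = π ^ 2 / 3 := by ring
end

section
/- The matrix elements c_{n,m} of a covariant phase observable E are determined by its first moment operator via c_{n,m} = i(n−m)⟨n|E^{(1)}|m⟩ for all n ≠ m; hence a covariant phase observable is uniquely determined by its first moment operator. -/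
open scoped Real

lemma phase_integral (k : ℂ) (hk : k ≠ 0)
    (hk1 : Complex.exp (Complex.I * k * (2 * (π:ℝ) : ℝ)) = 1) :
    (∫ θ in (0 : ℝ)..(2 * π), (θ : ℂ) * Complex.exp (Complex.I * k * θ))
      = 2 * π / (Complex.I * k) := by
  have hik : Complex.I * k ≠ 0 := mul_ne_zero Complex.I_ne_zero hk
  set F : ℝ → ℂ := fun t => (t : ℂ) * Complex.exp (Complex.I * k * t) / (Complex.I * k)
      + Complex.exp (Complex.I * k * t) / k ^ 2 with hF
  have hexp : ∀ θ : ℝ, HasDerivAt (fun t : ℝ => Complex.exp (Complex.I * k * t))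
      (Complex.I * k * Complex.exp (Complex.I * k * θ)) θ := by
    intro θ
    have h1 : HasDerivAt (fun z : ℂ => Complex.exp (Complex.I * k * z))
        (Complex.I * k * Complex.exp (Complex.I * k * θ)) (θ : ℂ) := by
      have := (Complex.hasDerivAt_exp (Complex.I * k * θ)).comp (θ : ℂ)
        ((hasDerivAt_id (θ : ℂ)).const_mul (Complex.I * k))
      simpa [Function.comp_def, mul_comm] using this
    exact h1.comp_ofReal
  have hderiv : ∀ θ : ℝ, HasDerivAt F ((θ : ℂ) * Complex.exp (Complex.I * k * θ)) θ := by
    intro θ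
    have hr : HasDerivAt (fun t : ℝ => (t : ℂ)) 1 θ := Complex.ofRealCLM.hasDerivAt
    have h := ((hr.mul (hexp θ)).div_const (Complex.I * k)).add
      ((hexp θ).div_const (k ^ 2))
    convert h using 1
    have hI : Complex.I * Complex.I = -1 := Complex.I_mul_I
    · rfl
    · rfl
    field_simp
    ring_nf
    rw [Complex.I_sq]
    ring
  have hcont : Continuous fun θ : ℝ => (θ : ℂ) * Complex.exp (Complex.I * k * θ) := by
    continuity
  have := intervalIntegral.integral_eq_sub_of_hasDerivAt
    (fun θ _ => hderiv θ) (hcont.intervalIntegrable 0 (2 * π))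
  rw [this]
  simp only [hF]
  rw [hk1]
  push_cast
  field_simp
  simp only [mul_zero, Complex.exp_zero]
  ring

lemma matel {n m : ℕ} (h : n ≠ m) (c v : ℂ)
    (hv : v = c * (1 / (2 * (π : ℂ))) *
        ∫ θ in (0 : ℝ)..(2 * π), (θ : ℂ) * Complex.exp (Complex.I * ((n : ℂ) - m) * θ)) :
    c = Complex.I * ((n : ℂ) - m) * v := by
  set k : ℂ := (n : ℂ) - m with hkdef
  have hk : k ≠ 0 := sub_ne_zero.mpr (by exact_mod_cast h)
  have hk1 : Complex.exp (Complex.I * k * ((2 * π : ℝ) : ℂ)) = 1 := by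
    have h2 := Complex.exp_int_mul_two_pi_mul_I ((n : ℤ) - m)
    rw [← h2]
    congr 1
    push_cast [hkdef]
    ring
  rw [phase_integral k hk hk1] at hv
  have hπ : (π : ℂ) ≠ 0 := by exact_mod_cast Real.pi_ne_zero
  have hik : Complex.I * k ≠ 0 := mul_ne_zero Complex.I_ne_zero hk
  rw [hv]
  field_simp

/-- The matrix elements of a covariant phase observable are recovered from its first
moment operator via `c_{n,m} = i(n−m)⟨n|E⁽¹⁾|m⟩` for `n ≠ m`; hence a covariant phase
observable is uniquely determined by its first moment operator. -/
theorem stmt9 {H : Type*} [NormedAddCommGroup H] [InnerProductSpace ℂ H] [CompleteSpace H]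
    (e : HilbertBasis ℕ ℂ H) (c c' : ℕ → ℕ → ℂ)
    (hdiag : ∀ n, c n n = 1) (hdiag' : ∀ n, c' n n = 1)
    (T T' : H →L[ℂ] H)
    -- `T`, `T'` are the first moment operators of the phase observables with
    -- phase matrices `c`, `c'`:  `⟨n|E⁽¹⁾|m⟩ = c_{n,m} (2π)⁻¹ ∫₀^{2π} θ e^{i(n−m)θ} dθ`
    (hT : ∀ n m : ℕ, (inner ℂ (e n) (T (e m)) : ℂ) =
      c n m * (1 / (2 * (π : ℂ))) *
        ∫ θ in (0 : ℝ)..(2 * π), (θ : ℂ) * Complex.exp (Complex.I * ((n : ℂ) - m) * θ))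
    (hT' : ∀ n m : ℕ, (inner ℂ (e n) (T' (e m)) : ℂ) =
      c' n m * (1 / (2 * (π : ℂ))) *
        ∫ θ in (0 : ℝ)..(2 * π), (θ : ℂ) * Complex.exp (Complex.I * ((n : ℂ) - m) * θ)) :
    (∀ n m : ℕ, n ≠ m →
      c n m = Complex.I * ((n : ℂ) - m) * (inner ℂ (e n) (T (e m)) : ℂ)) ∧
    (T' = T → c' = c) := by
  refine ⟨fun n m h => matel h _ _ (hT n m), fun hTT => ?_⟩
  funext n m
  by_cases h : n = m
  · rw [h, hdiag, hdiag']
  · rw [matel h _ _ (hT' n m), matel h _ _ (hT n m), hTT]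
end

section
/- If |c_{n,m}| = 1 for all n,m ∈ J, c_{n,n} = 1, c_{m,n} = \overline{c_{n,m}}, and every 3×3 principal submatrix [[1, c_{i,j}, c_{i,k}],[\overline{c_{i,j}}, 1, c_{j,k}],[\overline{c_{i,k}}, \overline{c_{j,k}}, 1]] has nonnegative determinant, then c_{n,m} = e^{i(υ_n − υ_m)} for some real phases (υ_n)_{n∈J}. -/
private theorem det_key13 (a b d : ℂ) (ha : ‖a‖ = 1) (hb : ‖b‖ = 1)
    (hd : ‖d‖ = 1)
    (h : 0 ≤ (Matrix.det
        !![1, a, d;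
           starRingEnd ℂ a, 1, b;
           starRingEnd ℂ d, starRingEnd ℂ b, 1]).re) :
    d = a * b := by
  have ha' : a * starRingEnd ℂ a = 1 := by
    rw [Complex.mul_conj, Complex.normSq_eq_norm_sq, ha]; norm_num
  have hb' : b * starRingEnd ℂ b = 1 := by
    rw [Complex.mul_conj, Complex.normSq_eq_norm_sq, hb]; norm_num
  have hd' : d * starRingEnd ℂ d = 1 := by
    rw [Complex.mul_conj, Complex.normSq_eq_norm_sq, hd]; norm_num
  set z := a * b * starRingEnd ℂ d with hz
  have hzabs : ‖z‖ = 1 := by simp [hz, map_mul, ha, hb, hd]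
  have hdet2 : (Matrix.det
        !![1, a, d;
           starRingEnd ℂ a, 1, b;
           starRingEnd ℂ d, starRingEnd ℂ b, 1]) = z + starRingEnd ℂ z - 2 := by
    simp only [hz, map_mul]
    simp [Matrix.det_fin_three]
    linear_combination (-1:ℂ)*ha' + (-1:ℂ)*hb' + (-1:ℂ)*hd'
  rw [hdet2] at h
  have hre : (1:ℝ) ≤ z.re := by
    have : (z + starRingEnd ℂ z - 2).re = 2 * z.re - 2 := by
      simp [Complex.sub_re, Complex.add_re, Complex.conj_re]; ring
    rw [this] at h; linarith
  have hz1 : z = 1 := by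
    have h1 : z.re ≤ 1 := hzabs ▸ Complex.re_le_norm z
    have hre1 : z.re = 1 := le_antisymm h1 hre
    have hsq : z.re * z.re + z.im * z.im = 1 := by
      have h2 := Complex.sq_norm z
      rw [hzabs] at h2
      rw [← Complex.normSq_apply, ← h2]; norm_num
    have him : z.im = 0 := by nlinarith
    exact Complex.ext (by simp [hre1]) (by simp [him])
  calc d = 1 * d := (one_mul d).symm
  _ = z * d := by rw [hz1]
  _ = a * b * (starRingEnd ℂ d * d) := by rw [hz]; ring
  _ = a * b := by rw [mul_comm (starRingEnd ℂ d) d, hd', mul_one]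

/-- If all entries of a Hermitian matrix `(c_{n,m})_{n,m∈J}` have modulus one, the
diagonal is one, and every `3×3` principal submatrix has nonnegative determinant, then
`c_{n,m} = e^{i(υ_n − υ_m)}` for some real phases `(υ_n)_{n∈J}`. -/
theorem stmt13 (J : Set ℕ) (hJ : J.Nonempty) (c : ℕ → ℕ → ℂ)
    (hmod : ∀ n ∈ J, ∀ m ∈ J, ‖c n m‖ = 1)
    (hdiag : ∀ n ∈ J, c n n = 1)
    (hherm : ∀ n ∈ J, ∀ m ∈ J, c m n = starRingEnd ℂ (c n m))
    (hdet : ∀ i ∈ J, ∀ j ∈ J, ∀ k ∈ J, i < j → j < k →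
      0 ≤ (Matrix.det
        !![1, c i j, c i k;
           starRingEnd ℂ (c i j), 1, c j k;
           starRingEnd ℂ (c i k), starRingEnd ℂ (c j k), 1]).re) :
    ∃ υ : ℕ → ℝ, ∀ n ∈ J, ∀ m ∈ J,
      c n m = Complex.exp (Complex.I * ((υ n : ℂ) - (υ m : ℂ))) := by
  -- unit property
  have hu : ∀ x ∈ J, ∀ y ∈ J, c x y * starRingEnd ℂ (c x y) = 1 := by
    intro x hx y hy
    rw [Complex.mul_conj, Complex.normSq_eq_norm_sq, hmod x hx y hy]; norm_num
  -- base case of cocycle for ordered triples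
  have base : ∀ i ∈ J, ∀ j ∈ J, ∀ k ∈ J, i < j → j < k → c i k = c i j * c j k :=
    fun i hi j hj k hk hij hjk =>
      det_key13 _ _ _ (hmod i hi j hj) (hmod j hj k hk) (hmod i hi k hk)
        (hdet i hi j hj k hk hij hjk)
  -- full cocycle
  have cocycle : ∀ a ∈ J, ∀ b ∈ J, ∀ d ∈ J, c a d = c a b * c b d := by
    intro a ha b hb d hd
    rcases eq_or_ne a b with rfl | hab
    · rw [hdiag a ha, one_mul]
    rcases eq_or_ne b d with rfl | hbd
    · rw [hdiag b hb, mul_one]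
    rcases eq_or_ne a d with rfl | had
    · rw [hdiag a ha, hherm a ha b hb, hu a ha b hb]
    have hba := hherm a ha b hb   -- c b a = conj (c a b)
    have hdb := hherm b hb d hd   -- c d b = conj (c b d)
    have hda := hherm a ha d hd   -- c d a = conj (c a d)
    rcases lt_trichotomy a b with h1 | h1 | h1
    · rcases lt_trichotomy b d with h2 | h2 | h2
      · exact base a ha b hb d hd h1 h2
      · exact absurd h2 hbd
      · rcases lt_trichotomy a d with h3 | h3 | h3
        · -- a < d < b : c a b = c a d * c d b
          have hB := base a ha d hd b hb h3 h2
          have := hu b hb d hd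
          calc c a d = c a d * (c b d * starRingEnd ℂ (c b d)) := by rw [this, mul_one]
          _ = (c a d * starRingEnd ℂ (c b d)) * c b d := by ring
          _ = (c a d * c d b) * c b d := by rw [hdb]
          _ = c a b * c b d := by rw [← hB]
        · exact absurd h3 had
        · -- d < a < b : c d b = c d a * c a b
          have hB := base d hd a ha b hb h3 h1
          have hua := hu a ha b hb
          have h' := congrArg (starRingEnd ℂ) hB
          rw [map_mul, hdb, Complex.conj_conj, hda, Complex.conj_conj, ← hba] at h'
          rw [h', hba,
            show c a b * (c a d * starRingEnd ℂ (c a b))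
              = c a d * (c a b * starRingEnd ℂ (c a b)) from by ring, hua, mul_one]
    · exact absurd h1 hab
    · rcases lt_trichotomy b d with h2 | h2 | h2
      · rcases lt_trichotomy a d with h3 | h3 | h3
        · -- b < a < d : c b d = c b a * c a d
          have hB := base b hb a ha d hd h1 h3
          have hua := hu a ha b hb
          calc c a d = (c a b * starRingEnd ℂ (c a b)) * c a d := by rw [hua, one_mul]
          _ = c a b * (starRingEnd ℂ (c a b) * c a d) := by ring
          _ = c a b * (c b a * c a d) := by rw [hba]
          _ = c a b * c b d := by rw [← hB]
        · exact absurd h3 had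
        · -- b < d < a : c b a = c b d * c d a
          have hB := base b hb d hd a ha h2 h3
          have hud := hu b hb d hd
          have h' := congrArg (starRingEnd ℂ) hB
          rw [map_mul, hba, Complex.conj_conj, ← hdb, hda, Complex.conj_conj] at h'
          rw [h',
            show c d b * c a d * c b d
              = c a d * (c b d * starRingEnd ℂ (c b d)) from by rw [hdb]; ring,
            hud, mul_one]
      · exact absurd h2 hbd
      · -- d < b < a : c d a = c d b * c b a
        have hB := base d hd b hb a ha h2 h1
        calc c a d = starRingEnd ℂ (c d a) := by rw [hda, Complex.conj_conj]
        _ = starRingEnd ℂ (c d b * c b a) := by rw [hB]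
        _ = starRingEnd ℂ (c d b) * starRingEnd ℂ (c b a) := by rw [map_mul]
        _ = c b d * c a b := by rw [hdb, hba, Complex.conj_conj, Complex.conj_conj]
        _ = c a b * c b d := by ring
  -- now define phases
  obtain ⟨n0, hn0⟩ := hJ
  refine ⟨fun n => -(c n0 n).arg, ?_⟩
  intro n hn m hm
  have h1 : Complex.I * ((↑(-(c n0 n).arg) : ℂ) - (↑(-(c n0 m).arg) : ℂ))
      = (↑(c n0 m).arg) * Complex.I - (↑(c n0 n).arg) * Complex.I := by
    push_cast; ring
  rw [h1, Complex.exp_sub]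
  have key : ∀ x ∈ J, Complex.exp ((↑(c n0 x).arg) * Complex.I) = c n0 x := by
    intro x hx
    have := Complex.norm_mul_exp_arg_mul_I (c n0 x)
    rwa [hmod n0 hn0 x hx, Complex.ofReal_one, one_mul] at this
  rw [key n hn, key m hm]
  have hcnn0 : c n n0 = starRingEnd ℂ (c n0 n) := hherm n0 hn0 n hn
  have hcoc := cocycle n hn n0 hn0 m hm
  have hne : c n0 n ≠ 0 := by
    intro h0
    have := hmod n0 hn0 n hn
    rw [h0] at this; simp at this
  rw [hcoc, hcnn0]
  rw [div_eq_mul_inv, mul_comm]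
  congr 1
  rw [Complex.inv_def, Complex.normSq_eq_norm_sq, hmod n0 hn0 n hn]
  norm_num
end

section
/- For every covariant phase observable E and every coherent state |z⟩, the phase probability density satisfies g^E_{|z⟩}(arg z) ≤ g^{E_can}_{|z⟩}(arg z), i.e., the canonical phase observable maximizes the coherent state phase density at θ = arg z. -/
open Filter

open scoped Real

lemma sqrt_succ_atTop' : Tendsto (fun n : ℕ => Real.sqrt (n + 1)) atTop atTop := by
  apply tendsto_atTop_atTop.mpr
  intro b
  refine ⟨⌈b ^ 2⌉₊, fun n hn => ?_⟩
  calc b ≤ |b| := le_abs_self b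
    _ = Real.sqrt (b ^ 2) := (Real.sqrt_sq_eq_abs b).symm
    _ ≤ Real.sqrt (n + 1) := Real.sqrt_le_sqrt (by
        calc b ^ 2 ≤ (⌈b ^ 2⌉₊ : ℝ) := Nat.le_ceil _
          _ ≤ (n : ℝ) := by exact_mod_cast hn
          _ ≤ n + 1 := by linarith)

lemma f_summable' (a : ℝ) (ha : 0 < a) :
    Summable (fun n : ℕ => a ^ n / Real.sqrt (Nat.factorial n)) := by
  set f := fun n : ℕ => a ^ n / Real.sqrt (Nat.factorial n) with hf
  have hpos : ∀ n, 0 < f n := fun n => by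
    have : (0:ℝ) < Nat.factorial n := by positivity
    positivity
  apply summable_of_ratio_test_tendsto_lt_one (l := 0) one_pos
  · exact Filter.Eventually.of_forall fun n => (hpos n).ne'
  · have heq : ∀ n : ℕ, ‖f (n + 1)‖ / ‖f n‖ = a / Real.sqrt (n + 1) := by
      intro n
      have hsq : Real.sqrt (Nat.factorial (n+1)) =
          Real.sqrt (n+1 : ℝ) * Real.sqrt (Nat.factorial n) := by
        rw [Nat.factorial_succ]; push_cast; rw [Real.sqrt_mul (by positivity)]
      rw [Real.norm_eq_abs, Real.norm_eq_abs, abs_of_pos (hpos _), abs_of_pos (hpos _), hf]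
      simp only []
      rw [hsq]
      have h1 : Real.sqrt (Nat.factorial n) ≠ 0 := by positivity
      have h2 : Real.sqrt (n+1 : ℝ) ≠ 0 := by positivity
      field_simp
      ring
    rw [funext heq]
    have h2 := sqrt_succ_atTop'.inv_tendsto_atTop
    have h3 := h2.const_mul a
    simp only [mul_zero] at h3
    exact h3.congr fun n => by simp [Pi.inv_apply, div_eq_mul_inv]

lemma psd_entry_bound' (c : ℕ → ℕ → ℂ)
    (hpsd : ∀ (F : Finset ℕ) (t : ℕ → ℂ),
      0 ≤ (∑ n ∈ F, ∑ m ∈ F, starRingEnd ℂ (t n) * c n m * t m).re ∧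
      (∑ n ∈ F, ∑ m ∈ F, starRingEnd ℂ (t n) * c n m * t m).im = 0)
    (hdiag : ∀ n, c n n = 1) (n m : ℕ) :
    (c n m).re ≤ 1 ∧ ‖c n m‖ ≤ 2 := by
  rcases eq_or_ne n m with rfl | hnm
  · simp [hdiag n]
  have key : ∀ w : ℂ,
      (∑ i ∈ ({n, m} : Finset ℕ), ∑ j ∈ ({n, m} : Finset ℕ),
        starRingEnd ℂ ((fun k => if k = n then 1 else w) i) * c i j *
          ((fun k => if k = n then 1 else w) j))
      = 1 + c n m * w + starRingEnd ℂ w * c m n + starRingEnd ℂ w * w := by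
    intro w
    rw [Finset.sum_pair hnm, Finset.sum_pair hnm, Finset.sum_pair hnm]
    simp only [if_pos rfl, if_neg hnm, if_neg (Ne.symm hnm)]
    simp [hdiag n, hdiag m]
    ring
  have h1 := hpsd {n, m} (fun k => if k = n then 1 else 1)
  have h2 := hpsd {n, m} (fun k => if k = n then 1 else Complex.I)
  have h3 := hpsd {n, m} (fun k => if k = n then 1 else -1)
  have h4 := hpsd {n, m} (fun k => if k = n then 1 else -Complex.I)
  rw [key 1] at h1
  rw [key Complex.I] at h2
  rw [key (-1)] at h3
  rw [key (-Complex.I)] at h4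
  simp only [Complex.add_re, Complex.add_im, Complex.mul_re, Complex.mul_im,
    Complex.one_re, Complex.one_im, Complex.I_re, Complex.I_im,
    Complex.neg_re, Complex.neg_im, map_one, map_neg, Complex.conj_I] at h1 h2 h3 h4
  obtain ⟨h1r, h1i⟩ := h1
  obtain ⟨h2r, h2i⟩ := h2
  obtain ⟨h3r, h3i⟩ := h3
  obtain ⟨h4r, h4i⟩ := h4
  constructor
  · nlinarith [h3r, h2i]
  · calc ‖c n m‖ ≤ |(c n m).re| + |(c n m).im| :=
          Complex.norm_le_abs_re_add_abs_im _
      _ ≤ 1 + 1 := add_le_add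
          (abs_le.mpr ⟨by nlinarith, by nlinarith⟩)
          (abs_le.mpr ⟨by nlinarith, by nlinarith⟩)
      _ = 2 := by norm_num

set_option maxHeartbeats 1000000 in
/-- For every covariant phase observable `E` (with phase matrix `c`) and every coherent
state `|z⟩`, the phase probability density at `θ = arg z` satisfies
`g^E_{|z⟩}(arg z) ≤ g^{E_can}_{|z⟩}(arg z)`: here
`g^E_{|z⟩}(arg z) = e^{-|z|²} ∑_{n,m} c_{n,m} |z|^{n+m}/√(n!m!)` and the canonical phase
observable corresponds to `c_{n,m} ≡ 1`. -/
theorem stmt19 (c : ℕ → ℕ → ℂ)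
    (hpsd : ∀ (F : Finset ℕ) (t : ℕ → ℂ),
      0 ≤ (∑ n ∈ F, ∑ m ∈ F, starRingEnd ℂ (t n) * c n m * t m).re ∧
      (∑ n ∈ F, ∑ m ∈ F, starRingEnd ℂ (t n) * c n m * t m).im = 0)
    (hdiag : ∀ n, c n n = 1) :
    ∀ z : ℂ,
      Real.exp (-(‖z‖) ^ 2) *
        (∑' p : ℕ × ℕ, c p.1 p.2 *
          (((‖z‖) ^ (p.1 + p.2) /
            Real.sqrt (Nat.factorial p.1 * Nat.factorial p.2) : ℝ) : ℂ)).re ≤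
      Real.exp (-(‖z‖) ^ 2) *
        (∑' p : ℕ × ℕ,
          (((‖z‖) ^ (p.1 + p.2) /
            Real.sqrt (Nat.factorial p.1 * Nat.factorial p.2) : ℝ) : ℂ)).re := by
  intro z
  set a := ‖z‖ with ha
  have ha0 : 0 ≤ a := norm_nonneg z
  set r : ℕ × ℕ → ℝ := fun p =>
    a ^ (p.1 + p.2) / Real.sqrt (Nat.factorial p.1 * Nat.factorial p.2) with hr
  have hrnn : ∀ p, 0 ≤ r p := fun p => by
    have : (0:ℝ) < Nat.factorial p.1 * Nat.factorial p.2 := by positivity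
    positivity
  apply mul_le_mul_of_nonneg_left _ (Real.exp_pos _).le
  rcases eq_or_lt_of_le ha0 with haz | hapos
  · -- a = 0 : the two functions being summed are equal
    have hfe : (fun p : ℕ × ℕ => c p.1 p.2 * (r p : ℂ)) = fun p : ℕ × ℕ => (r p : ℂ) := by
      funext p
      rcases p with ⟨n, m⟩
      rcases Nat.eq_zero_or_pos (n + m) with h0 | hpos
      · obtain ⟨hn, hm⟩ := Nat.add_eq_zero.mp h0
        subst hn; subst hm
        simp [hr, hdiag 0]
      · have : r (n, m) = 0 := by
          simp only [hr, ← haz]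
          rw [zero_pow (Nat.pos_iff_ne_zero.mp hpos), zero_div]
        rw [this]
        simp
    rw [hfe]
  · -- a > 0
    have hfsum : Summable (fun n : ℕ => a ^ n / Real.sqrt (Nat.factorial n)) :=
      f_summable' a hapos
    have hfnn : ∀ n : ℕ, 0 ≤ a ^ n / Real.sqrt (Nat.factorial n) := fun n => by
      have : (0:ℝ) < Nat.factorial n := by positivity
      positivity
    have hrfac : ∀ p : ℕ × ℕ, r p =
        (a ^ p.1 / Real.sqrt (Nat.factorial p.1)) *
        (a ^ p.2 / Real.sqrt (Nat.factorial p.2)) := by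
      intro p
      rw [hr]
      simp only
      rw [pow_add, Real.sqrt_mul (by positivity)]
      rw [div_mul_div_comm]
    have hprod : Summable (fun p : ℕ × ℕ =>
        (a ^ p.1 / Real.sqrt (Nat.factorial p.1)) *
        (a ^ p.2 / Real.sqrt (Nat.factorial p.2))) :=
      hfsum.mul_of_nonneg hfsum (fun n => hfnn n) (fun n => hfnn n)
    have hrsum : Summable r := hprod.congr fun p => (hrfac p).symm
    have hCsum : Summable (fun p : ℕ × ℕ => c p.1 p.2 * (r p : ℂ)) := by
      apply Summable.of_norm_bounded (g := fun p => 2 * r p) (hrsum.mul_left 2)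
      intro p
      rw [norm_mul, Complex.norm_real, Real.norm_eq_abs, abs_of_nonneg (hrnn p)]
      exact mul_le_mul_of_nonneg_right
        ((psd_entry_bound' c hpsd hdiag p.1 p.2).2) (hrnn p)
    have hRsum : Summable (fun p : ℕ × ℕ => ((r p : ℝ) : ℂ)) :=
      Complex.summable_ofReal.mpr hrsum
    rw [Complex.re_tsum hCsum, Complex.re_tsum hRsum]
    apply Summable.tsum_le_tsum _ ((Complex.hasSum_iff _ _ |>.mp hCsum.hasSum).1.summable)
      ((Complex.hasSum_iff _ _ |>.mp hRsum.hasSum).1.summable)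
    intro p
    have : (c p.1 p.2 * (r p : ℂ)).re = (c p.1 p.2).re * r p := by
      simp [Complex.mul_re]
    rw [this, Complex.ofReal_re]
    calc (c p.1 p.2).re * r p ≤ 1 * r p :=
          mul_le_mul_of_nonneg_right ((psd_entry_bound' c hpsd hdiag p.1 p.2).1) (hrnn p)
      _ = r p := one_mul _
end
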